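/- arXiv:math/0412059 — 9 statements merged into one kernel-verified Lean document; each statement's English description precedes it below -/
import Mathlib

section
/- Let p(t) and q(t) be real polynomials with nonnegative coefficients, each having a logarithmically concave sequence of coefficients with no internal zeros. Then the coefficient sequence of the product p(t)q(t) is also logarithmically concave. -/
/-!
Extend the coefficient sequences by zero to `ℤ`. For a nonnegative log-concave sequence without
internal zeros, induction on `k - i` (dividing by the positive middle term) gives
`a (i - 1) * a (k + 1) ≤ a i * a k` for all `i ≤ k`. For the convolution `c` of two such
sequences `a` and `b`, `c j ^ 2 - c (j - 1) * c (j + 1)` is a double sum over `(i, k)`; pairing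
`(i, k)` with `(k + 1, i - 1)`, each pair contributes the product of the minors
`a i * a k - a (i - 1) * a (k + 1)` and `β i * β k - β (i - 1) * β (k + 1)` of `a` and
`β = b (j - ·)`, and both change sign exactly where `i` passes `k`.
-/

open Function Polynomial

section Minors

variable {R : Type*} [CommRing R]

/-- The `2 × 2` minor of the Toeplitz matrix `(f (r - s))` on rows `i, k + 1` and columns `0, 1`. -/
def minor (f : ℤ → R) (i k : ℤ) : R := f i * f k - f (i - 1) * f (k + 1)

lemma minor_add_one_sub_one (f : ℤ → R) (i k : ℤ) : minor f (k + 1) (i - 1) = -minor f i k := by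
  simp only [minor, add_sub_cancel_right, sub_add_cancel]
  ring

lemma minor_add_one_self (f : ℤ → R) (k : ℤ) : minor f (k + 1) k = 0 := by
  simp only [minor, add_sub_cancel_right]
  ring

variable [LinearOrder R]

def MinorsNonneg (f : ℤ → R) : Prop := ∀ ⦃i k : ℤ⦄, i ≤ k → 0 ≤ minor f i k

variable [IsStrictOrderedRing R]

namespace MinorsNonneg

variable {f g : ℤ → R}

lemma minor_nonpos (hf : MinorsNonneg f) {i k : ℤ} (hki : k < i) : minor f i k ≤ 0 := by
  obtain rfl | hki := (Int.add_one_le_iff.2 hki).eq_or_lt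
  · exact (minor_add_one_self f k).le
  · have h := hf (Int.le_sub_one_of_lt hki)
    rw [minor_add_one_sub_one] at h
    exact neg_nonneg.1 h

lemma mul_minor_nonneg (hf : MinorsNonneg f) (hg : MinorsNonneg g) (i k : ℤ) :
    0 ≤ minor f i k * minor g i k := by
  rcases le_or_gt i k with hik | hki
  · exact mul_nonneg (hf hik) (hg hik)
  · exact mul_nonneg_of_nonpos_of_nonpos (hf.minor_nonpos hki) (hg.minor_nonpos hki)

lemma comp_sub (hf : MinorsNonneg f) (j : ℤ) : MinorsNonneg fun i ↦ f (j - i) := by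
  intro i k hik
  have h := hf (sub_le_sub_left hik j)
  simp only [minor] at h ⊢
  rw [show j - (i - 1) = j - i + 1 by ring, show j - (k + 1) = j - k - 1 by ring]
  linarith

end MinorsNonneg

theorem minorsNonneg_of_logConcave {f : ℤ → R} (h0 : ∀ n, 0 ≤ f n)
    (hlc : ∀ n, f (n - 1) * f (n + 1) ≤ f n ^ 2)
    (hniz : ∀ i j k, i ≤ j → j ≤ k → 0 < f i → 0 < f k → 0 < f j) : MinorsNonneg f := by
  intro i k hik
  induction k, hik using Int.leInduction with
  | base => simpa [minor, sq, sub_nonneg] using hlc i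
  | succ k hik ih =>
    rw [minor, sub_nonneg]
    rcases (h0 (i - 1)).eq_or_lt with hi | hi
    · simpa [← hi] using mul_nonneg (h0 i) (h0 (k + 1))
    rcases (h0 (k + 1 + 1)).eq_or_lt with hk | hk
    · simpa [← hk] using mul_nonneg (h0 i) (h0 (k + 1))
    have hmid : 0 < f (k + 1) := hniz (i - 1) (k + 1) (k + 1 + 1) (by omega) (by omega) hi hk
    have hlck : f k * f (k + 1 + 1) ≤ f (k + 1) ^ 2 := by simpa using hlc (k + 1)
    refine le_of_mul_le_mul_left ?_ hmid
    calc f (k + 1) * (f (i - 1) * f (k + 1 + 1))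
        = f (i - 1) * f (k + 1) * f (k + 1 + 1) := by ring
      _ ≤ f i * f k * f (k + 1 + 1) := mul_le_mul_of_nonneg_right (sub_nonneg.1 ih) (h0 _)
      _ = f i * (f k * f (k + 1 + 1)) := by ring
      _ ≤ f i * f (k + 1) ^ 2 := mul_le_mul_of_nonneg_left hlck (h0 i)
      _ = f (k + 1) * (f i * f (k + 1)) := by ring

end Minors

section Finsum

variable {α β R : Type*}

theorem HasFiniteSupport.mul_prod [MulZeroClass R] {f : α → R} {g : β → R}
    (hf : HasFiniteSupport f) (hg : HasFiniteSupport g) :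
    HasFiniteSupport fun p : α × β ↦ f p.1 * g p.2 :=
  (Set.Finite.prod hf hg).subset fun _ hp ↦ ⟨left_ne_zero_of_mul hp, right_ne_zero_of_mul hp⟩

theorem finsum_mul_finsum [CommSemiring R] {f : α → R} {g : β → R} (hf : HasFiniteSupport f)
    (hg : HasFiniteSupport g) :
    (∑ᶠ i, f i) * ∑ᶠ j, g j = ∑ᶠ p : α × β, f p.1 * g p.2 := by
  rw [finsum_curry _ (HasFiniteSupport.mul_prod hf hg), finsum_mul' _ _ hf]
  exact finsum_congr fun i ↦ mul_finsum' _ _ hg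

theorem finsum_le_finsum_of_add_comp_le [AddCommMonoid R] [LinearOrder R]
    [IsOrderedCancelAddMonoid R] {e : α → α} (he : Bijective e) {f g : α → R}
    (hf : HasFiniteSupport f) (hg : HasFiniteSupport g) (h : ∀ x, f x + f (e x) ≤ g x + g (e x)) :
    ∑ᶠ x, f x ≤ ∑ᶠ x, g x := by
  have hdouble (u : α → R) (hu : HasFiniteSupport u) :
      ∑ᶠ x, (u x + u (e x)) = 2 • ∑ᶠ x, u x := by
    rw [finsum_add_distrib hu (hu.fun_comp_of_injective he.injective),
      show ∑ᶠ x, u (e x) = ∑ᶠ x, u x from finsum_comp_equiv (Equiv.ofBijective e he), two_nsmul]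
  have hsum := finsum_le_finsum' (f := fun x ↦ f x + f (e x)) (g := fun x ↦ g x + g (e x))
    (hf.add (hf.comp_of_injective he.injective)) (hg.add (hg.comp_of_injective he.injective)) h
  rw [hdouble f hf, hdouble g hg] at hsum
  exact le_of_nsmul_le_nsmul_right two_ne_zero hsum

end Finsum

namespace MinorsNonneg

variable {R : Type*} [CommRing R] [LinearOrder R] [IsStrictOrderedRing R] {a b : ℤ → R}

theorem finsum_shift_mul_le_sq (ha : MinorsNonneg a) (hb : MinorsNonneg b)
    (hbf : HasFiniteSupport b) :
    (∑ᶠ i, a (i - 1) * b i) * (∑ᶠ i, a (i + 1) * b i) ≤ (∑ᶠ i, a i * b i) ^ 2 := by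
  have hfin (c : ℤ → R) : HasFiniteSupport fun i ↦ c i * b i := hbf.mul_right c
  rw [sq, finsum_mul_finsum (hfin _) (hfin _), finsum_mul_finsum (hfin _) (hfin _)]
  have hinv : Involutive fun p : ℤ × ℤ ↦ (p.2 + 1, p.1 - 1) := fun p ↦ by simp
  refine finsum_le_finsum_of_add_comp_le hinv.bijective
    (HasFiniteSupport.mul_prod (hfin fun i ↦ a (i - 1)) (hfin fun i ↦ a (i + 1)))
    (HasFiniteSupport.mul_prod (hfin a) (hfin a)) fun ⟨i, k⟩ ↦ ?_
  have h := ha.mul_minor_nonneg hb i k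
  simp only [minor] at h
  simp only [add_sub_cancel_right, sub_add_cancel]
  linear_combination h

theorem conv_sub_one_mul_conv_add_one_le_sq (ha : MinorsNonneg a) (hb : MinorsNonneg b)
    (hbf : HasFiniteSupport b) (j : ℤ) :
    (∑ᶠ i, a i * b (j - 1 - i)) * (∑ᶠ i, a i * b (j + 1 - i)) ≤ (∑ᶠ i, a i * b (j - i)) ^ 2 := by
  have hpred : ∑ᶠ i, a (i - 1) * b (j - i) = ∑ᶠ i, a i * b (j - 1 - i) := by
    rw [← finsum_comp_equiv (Equiv.subRight 1) (f := fun i ↦ a i * b (j - 1 - i))]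
    simp
  have hsucc : ∑ᶠ i, a (i + 1) * b (j - i) = ∑ᶠ i, a i * b (j + 1 - i) := by
    rw [← finsum_comp_equiv (Equiv.addRight 1) (f := fun i ↦ a i * b (j + 1 - i))]
    simp
  rw [← hpred, ← hsucc]
  exact ha.finsum_shift_mul_le_sq (hb.comp_sub j) (hbf.fun_comp_of_injective sub_right_injective)

end MinorsNonneg

theorem AddMonoidAlgebra.coeff_mul_eq_finsum {R G : Type*} [Semiring R] [AddCommGroup G]
    (x y : AddMonoidAlgebra R G) (g : G) :
    (x * y).coeff g = ∑ᶠ h, x.coeff h * y.coeff (g - h) := by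
  rw [coeff_mul_apply_left, Finsupp.sum, finsum_eq_sum_of_support_subset _
    ((support_mul_subset_left _ _).trans (Finsupp.fun_support_eq _).le)]
  simp [neg_add_eq_sub]

namespace Polynomial

variable {R : Type*}

theorem coeff_toLaurent_natCast [Semiring R] (p : R[X]) (n : ℕ) :
    (toLaurent p).coeff n = p.coeff n := by
  rw [LaurentPolynomial.coeff_toLaurent]
  exact Finsupp.mapDomain_apply Nat.castEmbedding.injective _ n

theorem coeff_toLaurent_of_neg [Semiring R] (p : R[X]) {n : ℤ} (hn : n < 0) :
    (toLaurent p).coeff n = 0 := by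
  rw [← Finsupp.notMem_support_iff, LaurentPolynomial.support_coeff_toLaurent]
  simp only [Finset.mem_map, Nat.castEmbedding_apply, not_exists, not_and]
  omega

theorem minorsNonneg_coeff_toLaurent [CommRing R] [LinearOrder R] [IsStrictOrderedRing R]
    {p : R[X]} (h0 : ∀ j, 0 ≤ p.coeff j)
    (hlc : ∀ j : ℕ, 1 ≤ j → p.coeff (j - 1) * p.coeff (j + 1) ≤ (p.coeff j) ^ 2)
    (hniz : ∀ i j k : ℕ, i ≤ j → j ≤ k → 0 < p.coeff i → 0 < p.coeff k → 0 < p.coeff j) :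
    MinorsNonneg (toLaurent p).coeff := by
  have hnat := coeff_toLaurent_natCast p
  have hnonneg (n : ℤ) : 0 ≤ (toLaurent p).coeff n := by
    rcases lt_or_ge n 0 with hn | hn
    · exact (coeff_toLaurent_of_neg p hn).ge
    · lift n to ℕ using hn
      exact hnat n ▸ h0 n
  refine minorsNonneg_of_logConcave hnonneg (fun n ↦ ?_) (fun i j k hij hjk hi hk ↦ ?_)
  · rcases lt_or_ge n 1 with hn | hn
    · rw [coeff_toLaurent_of_neg p (by omega), zero_mul]
      exact sq_nonneg _
    · lift n to ℕ using by omega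
      rw [show (n : ℤ) - 1 = ((n - 1 : ℕ) : ℤ) by omega, ← Nat.cast_succ, hnat, hnat, hnat]
      exact hlc n (by omega)
  · lift i to ℕ using not_lt.1 fun h ↦ hi.ne' (coeff_toLaurent_of_neg p h)
    lift j to ℕ using by omega
    lift k to ℕ using by omega
    rw [hnat] at hi hk ⊢
    exact hniz i j k (by omega) (by omega) hi hk

end Polynomial

theorem log_concave_coeffs_of_product (p q : Polynomial ℝ)
    (hp0 : ∀ j, 0 ≤ p.coeff j) (hq0 : ∀ j, 0 ≤ q.coeff j)
    (hplc : ∀ j : ℕ, 1 ≤ j → p.coeff (j - 1) * p.coeff (j + 1) ≤ (p.coeff j) ^ 2)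
    (hqlc : ∀ j : ℕ, 1 ≤ j → q.coeff (j - 1) * q.coeff (j + 1) ≤ (q.coeff j) ^ 2)
    (hpniz : ∀ i j k : ℕ, i ≤ j → j ≤ k → 0 < p.coeff i → 0 < p.coeff k → 0 < p.coeff j)
    (hqniz : ∀ i j k : ℕ, i ≤ j → j ≤ k → 0 < q.coeff i → 0 < q.coeff k → 0 < q.coeff j) :
    ∀ j : ℕ, 1 ≤ j →
      (p * q).coeff (j - 1) * (p * q).coeff (j + 1) ≤ ((p * q).coeff j) ^ 2 := by
  intro j hj
  have key := (minorsNonneg_coeff_toLaurent hp0 hplc hpniz).conv_sub_one_mul_conv_add_one_le_sq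
    (minorsNonneg_coeff_toLaurent hq0 hqlc hqniz) (Finsupp.hasFiniteSupport _) j
  simp only [← AddMonoidAlgebra.coeff_mul_eq_finsum, ← map_mul] at key
  rwa [show (j : ℤ) - 1 = ((j - 1 : ℕ) : ℤ) by omega, ← Nat.cast_succ,
    coeff_toLaurent_natCast, coeff_toLaurent_natCast, coeff_toLaurent_natCast] at key
end

section
/- Let F(t) = Σ_{j=0}^{d} N(j) t^j be a real polynomial with nonnegative coefficients such that every complex zero z of F satisfies |arg(z)| ≥ 2π/3 (i.e., F has no zeros in the open sector of half-angle 2π/3 around the positive real axis). Then N(j)² ≥ N(j−1)·N(j+1) for all 1 ≤ j ≤ d−1. -/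
/-- Nonnegative, strongly log-concave sequence (all "synchronized" 2x2 minors nonneg). -/
def LCseq (a : ℤ → ℝ) : Prop :=
  (∀ k, 0 ≤ a k) ∧ ∀ i j : ℤ, i ≤ j + 1 → a (i - 1) * a (j + 1) ≤ a i * a j

lemma LCseq.shift {a : ℤ → ℝ} (h : LCseq a) (k : ℕ) :
    ∀ i j : ℤ, i ≤ j + k → a (i - k) * a (j + k) ≤ a i * a j := by
  induction k with
  | zero => intro i j _; simp
  | succ k ih =>
    intro i j hij
    push_cast at hij ⊢
    rcases eq_or_lt_of_le hij with he | hlt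
    · have h1 : i - (k + 1) = j := by omega
      have h2 : j + (k + 1) = i := by omega
      rw [h1, h2, mul_comm]
    · have hij' : i ≤ j + k := by omega
      calc a (i - (k + 1)) * a (j + (k + 1))
          = a ((i - k) - 1) * a ((j + k) + 1) := by ring_nf
        _ ≤ a (i - k) * a (j + k) := h.2 _ _ (by omega)
        _ ≤ a i * a j := by have := ih i j hij'; push_cast at this; exact this

lemma LCseq.linear {a : ℤ → ℝ} (h : LCseq a) {c₀ c₁ : ℝ} (h0 : 0 ≤ c₀) (h1 : 0 ≤ c₁) :
    LCseq (fun k => c₀ * a k + c₁ * a (k - 1)) := by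
  constructor
  · intro k
    have := h.1 k; have := h.1 (k - 1)
    positivity
  · intro i j hij
    simp only
    have t1 := h.2 i j hij
    have t2 := h.2 (i - 1) (j - 1) (by omega)
    have t3 : a (i - 2) * a (j + 1) ≤ a i * a (j - 1) := by
      have := h.shift 2 i (j - 1) (by push_cast; omega)
      push_cast at this
      convert this using 3 <;> ring
    have e1 : i - 1 - 1 = i - 2 := by ring
    have e2 : j - 1 + 1 = j := by ring
    rw [e1, e2] at t2
    rw [e1, show j + 1 - 1 = j from by ring]
    nlinarith [mul_le_mul_of_nonneg_left t1 (mul_nonneg h0 h0),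
      mul_le_mul_of_nonneg_left t2 (mul_nonneg h1 h1),
      mul_le_mul_of_nonneg_left t3 (mul_nonneg h0 h1)]

lemma LCseq.quadratic {a : ℤ → ℝ} (h : LCseq a) {b c : ℝ} (hb : 0 ≤ b) (hc : 0 ≤ c)
    (hbc : c ≤ b ^ 2) :
    LCseq (fun k => c * a k + b * a (k - 1) + a (k - 2)) := by
  constructor
  · intro k
    have := h.1 k; have := h.1 (k - 1); have := h.1 (k - 2)
    positivity
  · intro i j hij
    simp only
    have t1 := h.2 i j hij
    have t2 := h.2 (i - 1) (j - 1) (by omega)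
    have t3 := h.2 (i - 2) (j - 2) (by omega)
    have t4 : a (i - 2) * a (j + 1) ≤ a i * a (j - 1) := by
      have := h.shift 2 i (j - 1) (by push_cast; omega)
      push_cast at this; convert this using 3 <;> ring
    have t5 : a (i - 3) * a j ≤ a (i - 1) * a (j - 2) := by
      have := h.shift 2 (i - 1) (j - 2) (by push_cast; omega)
      push_cast at this; convert this using 3 <;> ring
    have t6 : a (i - 3) * a (j + 1) ≤ a i * a (j - 2) := by
      have := h.shift 3 i (j - 2) (by push_cast; omega)
      push_cast at this; convert this using 3 <;> ring
    have e1 : i - 1 - 1 = i - 2 := by ring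
    have e2 : j - 1 + 1 = j := by ring
    have e3 : i - 2 - 1 = i - 3 := by ring
    have e4 : j - 2 + 1 = j - 1 := by ring
    have e5 : i - 1 - 2 = i - 3 := by ring
    have e6 : j + 1 - 1 = j := by ring
    have e7 : j + 1 - 2 = j - 1 := by ring
    rw [e1, e2] at t2
    rw [e3, e4] at t3
    rw [e1, e5, e6, e7]
    nlinarith [mul_le_mul_of_nonneg_left t1 (mul_nonneg hc hc),
      mul_le_mul_of_nonneg_left t4 (mul_nonneg hc hb),
      mul_le_mul_of_nonneg_left t2 (sub_nonneg.2 hbc),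
      mul_le_mul_of_nonneg_left t5 hb,
      mul_le_mul_of_nonneg_left t6 hc, t3]

open Polynomial

/-- The coefficients of a real polynomial as a sequence indexed by `ℤ`. -/
def Aseq (F : Polynomial ℝ) : ℤ → ℝ := fun k => if 0 ≤ k then F.coeff k.toNat else 0

lemma coeff_linmul (r : ℝ) (G : Polynomial ℝ) (n : ℕ) :
    ((X - C r) * G).coeff n = (-r) * G.coeff n + (if 1 ≤ n then G.coeff (n - 1) else 0) := by
  have h : (X - C r) * G = G * X ^ 1 - C r * G := by ring
  rw [h, coeff_sub, coeff_mul_X_pow', coeff_C_mul]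
  split_ifs <;> ring

lemma Aseq_linmul (r : ℝ) (G : Polynomial ℝ) :
    Aseq ((X - C r) * G) = fun k => (-r) * Aseq G k + 1 * Aseq G (k - 1) := by
  funext k
  simp only [Aseq]
  split_ifs with h1 h2 h3
  · rw [coeff_linmul, if_pos (by omega : 1 ≤ k.toNat),
      (by omega : (k - 1).toNat = k.toNat - 1)]
    ring
  · rw [coeff_linmul, (by omega : k.toNat = 0)]
    norm_num
  · omega
  · ring

lemma coeff_quadmul (b c : ℝ) (G : Polynomial ℝ) (n : ℕ) :
    ((X ^ 2 + C b * X + C c) * G).coeff n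
      = c * G.coeff n + b * (if 1 ≤ n then G.coeff (n - 1) else 0)
        + (if 2 ≤ n then G.coeff (n - 2) else 0) := by
  have h : (X ^ 2 + C b * X + C c) * G = C c * G + C b * (G * X ^ 1) + G * X ^ 2 := by ring
  rw [h, coeff_add, coeff_add, coeff_C_mul, coeff_C_mul, coeff_mul_X_pow', coeff_mul_X_pow']

lemma Aseq_quadmul (b c : ℝ) (G : Polynomial ℝ) :
    Aseq ((X ^ 2 + C b * X + C c) * G)
      = fun k => c * Aseq G k + b * Aseq G (k - 1) + Aseq G (k - 2) := by
  funext k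
  simp only [Aseq]
  split_ifs with h1 h2 h3 h2 h3 h3 h3
  · rw [coeff_quadmul, if_pos (by omega : 1 ≤ k.toNat), if_pos (by omega : 2 ≤ k.toNat),
      (by omega : (k - 1).toNat = k.toNat - 1), (by omega : (k - 2).toNat = k.toNat - 2)]
  · rw [coeff_quadmul, if_pos (by omega : 1 ≤ k.toNat), if_neg (by omega : ¬ 2 ≤ k.toNat),
      (by omega : (k - 1).toNat = k.toNat - 1)]
  · omega
  · rw [coeff_quadmul, if_neg (by omega : ¬ 1 ≤ k.toNat), if_neg (by omega : ¬ 2 ≤ k.toNat)]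
  · omega
  · omega
  · omega
  · ring

lemma LCseq_zero : LCseq (Aseq 0) := by
  constructor <;> simp [Aseq]

lemma key : ∀ n : ℕ, ∀ F : Polynomial ℝ, F.natDegree = n → 0 ≤ F.leadingCoeff →
    (∀ z : ℂ, Polynomial.aeval z F = 0 → z = 0 ∨ 2 * Real.pi / 3 ≤ |z.arg|) →
    LCseq (Aseq F) := by
  intro n
  induction n using Nat.strong_induction_on with
  | _ n ih =>
    intro F hdeg hlead hsec
    by_cases hF0 : F = 0
    · subst hF0; exact LCseq_zero
    rcases Nat.eq_zero_or_pos n with hn0 | hnpos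
    · -- constant polynomial
      have hC : F = C (F.coeff 0) := Polynomial.eq_C_of_natDegree_eq_zero (hn0 ▸ hdeg)
      have hc0 : 0 ≤ F.coeff 0 := by
        rw [Polynomial.leadingCoeff, hdeg, hn0] at hlead; exact hlead
      have hnn : ∀ k, 0 ≤ Aseq F k := by
        intro k
        simp only [Aseq]
        split_ifs
        · rw [hC, coeff_C]
          split_ifs <;> simp [hc0]
        · exact le_refl 0
      have hzero : ∀ k : ℤ, k ≠ 0 → Aseq F k = 0 := by
        intro k hk
        simp only [Aseq]
        split_ifs with h
        · rw [hC, coeff_C, if_neg (by omega : ¬ k.toNat = 0)]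
        · rfl
      refine ⟨hnn, fun i j hij => ?_⟩
      rcases eq_or_ne i 1 with rfl | hi
      · rw [hzero (j + 1) (by omega), mul_zero]
        exact mul_nonneg (hnn _) (hnn _)
      · rw [hzero (i - 1) (by omega), zero_mul]
        exact mul_nonneg (hnn _) (hnn _)
    · -- F has a complex root
      have hd : 0 < (F.map (algebraMap ℝ ℂ)).degree := by
        rw [Polynomial.degree_map_eq_of_injective (algebraMap ℝ ℂ).injective]
        exact Polynomial.natDegree_pos_iff_degree_pos.mp (by omega)
      obtain ⟨z, hzroot⟩ := Complex.exists_root hd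
      have hz : Polynomial.aeval z F = 0 := by
        rw [Polynomial.aeval_def, ← Polynomial.eval_map]; exact hzroot
      by_cases him : z.im = 0
      · -- real root
        have hzre : ((z.re : ℝ) : ℂ) = z := Complex.ext rfl (by simp [him])
        have hroot : F.IsRoot z.re := by
          have h1 : algebraMap ℝ ℂ (F.eval z.re) = 0 := by
            rw [← Polynomial.aeval_algebraMap_apply_eq_algebraMap_eval]
            simpa [hzre] using hz
          exact (map_eq_zero_iff _ (algebraMap ℝ ℂ).injective).mp h1
        have hr : z.re ≤ 0 := by
          by_contra hpos
          push_neg at hpos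
          rcases hsec z hz with h0 | harg
          · rw [← hzre] at h0
            have h9 : z.re = 0 := by simpa using congrArg Complex.re h0
            linarith
          · rw [← hzre, Complex.arg_ofReal_of_nonneg hpos.le] at harg
            simp at harg
            nlinarith [Real.pi_pos]
        obtain ⟨G, hG⟩ := Polynomial.dvd_iff_isRoot.mpr hroot
        have hGne : G ≠ 0 := by rintro rfl; rw [mul_zero] at hG; exact hF0 hG
        have hdegG : G.natDegree = n - 1 := by
          have h2 := Polynomial.natDegree_mul (Polynomial.X_sub_C_ne_zero z.re) hGne
          rw [← hG, Polynomial.natDegree_X_sub_C] at h2; omega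
        have hleadG : 0 ≤ G.leadingCoeff := by
          rwa [hG, Polynomial.leadingCoeff_mul, (Polynomial.monic_X_sub_C z.re).leadingCoeff,
            one_mul] at hlead
        have hsecG : ∀ w : ℂ, Polynomial.aeval w G = 0 → w = 0 ∨ 2 * Real.pi / 3 ≤ |w.arg| := by
          intro w hw; exact hsec w (by rw [hG, map_mul, hw, mul_zero])
        have hLCG := ih (n - 1) (by omega) G hdegG hleadG hsecG
        rw [hG, Aseq_linmul]
        exact hLCG.linear (neg_nonneg.mpr hr) zero_le_one
      · -- nonreal root
        have hz0 : z ≠ 0 := fun h => him (by rw [h]; rfl)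
        have harg : 2 * Real.pi / 3 ≤ |z.arg| := (hsec z hz).resolve_left hz0
        have hdvd : X ^ 2 + C (-(2 * z.re)) * X + C (‖z‖ ^ 2) ∣ F := by
          have h3 := Polynomial.quadratic_dvd_of_aeval_eq_zero_im_ne_zero F hz him
          have h4 : X ^ 2 + C (-(2 * z.re)) * X + C (‖z‖ ^ 2)
              = X ^ 2 - C (2 * z.re) * X + C ((‖z‖ : ℝ) ^ 2) := by
            rw [map_neg]; ring
          rw [h4]; exact h3
        obtain ⟨G, hG⟩ := hdvd
        set b : ℝ := -(2 * z.re) with hbdef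
        set c : ℝ := ‖z‖ ^ 2 with hcdef
        have hq2 : (X ^ 2 + C b * X + C c : Polynomial ℝ).natDegree = 2 := by
          have h5 : (X ^ 2 + C b * X + C c : Polynomial ℝ)
              = C 1 * X ^ 2 + C b * X + C c := by simp
          rw [h5]; exact Polynomial.natDegree_quadratic one_ne_zero
        have hqlead : (X ^ 2 + C b * X + C c : Polynomial ℝ).leadingCoeff = 1 := by
          rw [Polynomial.leadingCoeff, hq2]
          simp [coeff_X_pow, Polynomial.coeff_C]
        have hqne : (X ^ 2 + C b * X + C c : Polynomial ℝ) ≠ 0 := by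
          intro h6; rw [h6] at hq2; simp at hq2
        have hGne : G ≠ 0 := by rintro rfl; rw [mul_zero] at hG; exact hF0 hG
        have hdegG : G.natDegree = n - 2 := by
          have h7 := Polynomial.natDegree_mul hqne hGne
          rw [← hG, hq2] at h7; omega
        have hlt : n - 2 < n := by omega
        have hleadG : 0 ≤ G.leadingCoeff := by
          rwa [hG, Polynomial.leadingCoeff_mul, hqlead, one_mul] at hlead
        have hsecG : ∀ w : ℂ, Polynomial.aeval w G = 0 → w = 0 ∨ 2 * Real.pi / 3 ≤ |w.arg| := by
          intro w hw; exact hsec w (by rw [hG, map_mul, hw, mul_zero])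
        have hLCG := ih (n - 2) hlt G hdegG hleadG hsecG
        -- geometric estimates
        have habs : 0 < ‖z‖ := norm_pos_iff.mpr hz0
        have hcosarg := Complex.cos_arg hz0
        have hcosle : Real.cos z.arg ≤ -(1 / 2) := by
          have h1 : Real.cos z.arg = Real.cos |z.arg| := by
            rcases abs_cases z.arg with ⟨h, _⟩ | ⟨h, _⟩ <;> rw [h]
            rw [Real.cos_neg]
          have h2 : Real.cos |z.arg| ≤ Real.cos (2 * Real.pi / 3) :=
            Real.cos_le_cos_of_nonneg_of_le_pi (by positivity) (Complex.abs_arg_le_pi z) harg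
          have h3 : Real.cos (2 * Real.pi / 3) = -(1 / 2) := by
            rw [show 2 * Real.pi / 3 = Real.pi - Real.pi / 3 by ring, Real.cos_pi_sub,
              Real.cos_pi_div_three]
          rw [h1]; linarith
        have hre : z.re ≤ -(‖z‖) / 2 := by
          have h8 : z.re = ‖z‖ * Real.cos z.arg := by
            rw [hcosarg]; field_simp
          nlinarith
        have hnorm : ‖z‖ = ‖z‖ := rfl
        have hb : 0 ≤ b := by rw [hbdef]; nlinarith
        have hc : 0 ≤ c := by rw [hcdef]; positivity
        have hbc : c ≤ b ^ 2 := by rw [hbdef, hcdef, hnorm]; nlinarith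
        rw [hG, Aseq_quadmul]
        exact hLCG.quadratic hb hc hbc

theorem log_concave_of_sector_nonvanishing (d : ℕ) (F : Polynomial ℝ)
    (hdeg : F.natDegree ≤ d)
    (hnonneg : ∀ j, 0 ≤ F.coeff j)
    (hsector : ∀ z : ℂ, Polynomial.aeval z F = 0 →
      z = 0 ∨ 2 * Real.pi / 3 ≤ |z.arg|) :
    ∀ j : ℕ, 1 ≤ j → j ≤ d - 1 →
      F.coeff (j - 1) * F.coeff (j + 1) ≤ (F.coeff j) ^ 2 := by
  intro j hj _
  have hlead : 0 ≤ F.leadingCoeff := hnonneg F.natDegree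
  have hLC := key F.natDegree F rfl hlead hsector
  have h := hLC.2 (j : ℤ) (j : ℤ) (by omega)
  have e1 : Aseq F ((j : ℤ) - 1) = F.coeff (j - 1) := by
    simp only [Aseq]
    rw [if_pos (by omega : (0:ℤ) ≤ (j : ℤ) - 1), (by omega : ((j : ℤ) - 1).toNat = j - 1)]
  have e2 : Aseq F ((j : ℤ) + 1) = F.coeff (j + 1) := by
    simp only [Aseq]
    rw [if_pos (by omega : (0:ℤ) ≤ (j : ℤ) + 1), (by omega : ((j : ℤ) + 1).toNat = j + 1)]
  have e3 : Aseq F (j : ℤ) = F.coeff j := by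
    simp only [Aseq]
    rw [if_pos (by omega : (0:ℤ) ≤ (j : ℤ)), Int.toNat_natCast]
  rw [e1, e2, e3] at h
  rw [sq]
  exact h
end

section
/- Every zero of a real quadratic t² + bt + c with nonnegative coefficients b, c satisfying b² ≥ c lies outside the open sector {z ∈ ℂ : z ≠ 0, |arg(z)| < 2π/3}; that is, each zero z satisfies z = 0 or |arg(z)| ≥ 2π/3. -/
theorem quadratic_zeros_outside_sector (b c : ℝ) (hb : 0 ≤ b) (hc : 0 ≤ c)
    (hbc : c ≤ b ^ 2) :
    ∀ z : ℂ, z ^ 2 + (b : ℂ) * z + (c : ℂ) = 0 →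
      z = 0 ∨ 2 * Real.pi / 3 ≤ |z.arg| := by
  intro z h
  by_cases hz : z = 0
  · exact Or.inl hz
  right
  rw [Complex.ext_iff] at h
  simp [pow_two, Complex.mul_re, Complex.mul_im, Complex.add_re, Complex.add_im] at h
  obtain ⟨h1, h2⟩ := h
  set x := z.re with hx
  set y := z.im with hy
  by_cases him : y = 0
  · -- z is a negative real, arg = π
    have hxne : x ≠ 0 := by
      intro h0
      exact hz (Complex.ext h0 him)
    have hxneg : x < 0 := by
      rcases lt_trichotomy x 0 with h | h | h
      · exact h
      · exact absurd h hxne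
      · nlinarith [him, h1]
    have harg : z.arg = Real.pi := by
      rw [Complex.arg_eq_pi_iff]
      exact ⟨hxneg, him⟩
    rw [harg, abs_of_pos Real.pi_pos]
    nlinarith [Real.pi_pos]
  · -- complex case: x = -b/2, x² + y² = c
    have hxval : x = -b / 2 := by
      have : y * (x + x + b) = 0 := by nlinarith [h2]
      rcases mul_eq_zero.mp this with h | h
      · exact absurd h him
      · linarith
    have hyc : y ^ 2 = c - b ^ 2 / 4 := by nlinarith [h1]
    have hcpos : 0 < c := by nlinarith [sq_pos_of_ne_zero him, sq_nonneg b]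
    have habs : ‖z‖ = Real.sqrt c := by
      rw [Complex.norm_def, Complex.normSq_apply]
      congr 1
      nlinarith [hyc]
    have hsqrtc : Real.sqrt c ≤ b := by
      rw [show b = Real.sqrt (b ^ 2) by rw [Real.sqrt_sq hb]]
      exact Real.sqrt_le_sqrt hbc
    have hsqrtpos : 0 < Real.sqrt c := Real.sqrt_pos.mpr hcpos
    have hcos : Real.cos z.arg ≤ -(1 / 2) := by
      rw [Complex.cos_arg hz, habs, ← hx, hxval]
      rw [div_le_iff₀ hsqrtpos]
      nlinarith [hsqrtc, hsqrtpos]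
    by_contra hlt
    push_neg at hlt
    have hcos23 : Real.cos (2 * Real.pi / 3) = -(1 / 2) := by
      rw [show (2 * Real.pi / 3) = Real.pi - Real.pi / 3 by ring,
        Real.cos_pi_sub, Real.cos_pi_div_three]
    have hmono : Real.cos (2 * Real.pi / 3) < Real.cos |z.arg| := by
      apply Real.cos_lt_cos_of_nonneg_of_le_pi (abs_nonneg _) _ hlt
      nlinarith [Real.pi_pos]
    rw [Real.cos_abs, hcos23] at hmono
    linarith
end

section
/- Let A ⊆ ℂ be open and connected, let F be a complex polynomial in variables {z_v : v ∈ V} nonvanishing on A^V, let w ∈ V, and let ξ₀ lie in the closure of A. Then the polynomial in the remaining variables obtained by setting z_w = ξ₀ is either identically zero or nonvanishing on A^{V∖{w}}. -/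
open MvPolynomial

noncomputable def polyRestrict {V : Type*} [DecidableEq V]
    (F : MvPolynomial V ℂ) (x : V → ℂ) (v : V) : Polynomial ℂ :=
  MvPolynomial.aeval (fun u => if u = v then Polynomial.X else Polynomial.C (x u)) F

lemma polyRestrict_eval {V : Type*} [DecidableEq V]
    (F : MvPolynomial V ℂ) (x : V → ℂ) (v : V) (t : ℂ) :
    (polyRestrict F x v).eval t = MvPolynomial.eval (Function.update x v t) F := by
  induction F using MvPolynomial.induction_on with
  | C a => simp [polyRestrict]
  | add p q hp hq => simp [polyRestrict, map_add] at *; simp [hp, hq]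
  | mul_X p n hp =>
      by_cases h : n = v
      · subst h
        simp only [polyRestrict, map_mul, aeval_X, if_pos rfl, Polynomial.eval_mul,
          Polynomial.eval_X, MvPolynomial.eval_mul, MvPolynomial.eval_X,
          Function.update_self] at *
        simp [hp]
      · simp only [polyRestrict, map_mul, aeval_X, if_neg h, Polynomial.eval_mul,
          Polynomial.eval_C, MvPolynomial.eval_mul, MvPolynomial.eval_X,
          Function.update_apply, if_neg h] at *
        rw [hp]

lemma continuous_mvEval {V : Type*} (F : MvPolynomial V ℂ) :
    Continuous fun x : V → ℂ => MvPolynomial.eval x F := by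
  induction F using MvPolynomial.induction_on with
  | C a => simpa using continuous_const
  | add p q hp hq => simp only [map_add]; exact hp.add hq
  | mul_X p n hp => simp only [map_mul, MvPolynomial.eval_X]; exact hp.mul (continuous_apply n)

lemma isOpen_infinite {A : Set ℂ} (hA : IsOpen A) (hne : A.Nonempty) : A.Infinite := by
  obtain ⟨z, hz⟩ := hne
  obtain ⟨ε, hε, hball⟩ := Metric.isOpen_iff.mp hA z hz
  have h1 : (Set.Ioo (0:ℝ) (ε/2)).Infinite := Set.Ioo_infinite (by linarith)
  have h2 : ((fun t : ℝ => z + (t:ℂ)) '' Set.Ioo 0 (ε/2)).Infinite := by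
    refine h1.image ?_
    intro a _ b _ h
    simpa [Complex.ofReal_inj] using h
  refine h2.mono ?_
  rintro _ ⟨t, ht, rfl⟩
  apply hball
  simp only [Metric.mem_ball, dist_eq_norm, add_sub_cancel_left]
  rw [Complex.norm_real, Real.norm_eq_abs, abs_of_pos ht.1]
  linarith [ht.2]

lemma hurwitz_step {V : Type*} [DecidableEq V]
    {A : Set ℂ} (hAopen : IsOpen A)
    (F : MvPolynomial V ℂ)
    (hF : ∀ x : V → ℂ, (∀ v, x v ∈ A) → MvPolynomial.eval x F ≠ 0)
    (w : V) (ξ₀ : ℂ) (hξ₀ : ξ₀ ∈ closure A)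
    (x : V → ℂ) (hx : ∀ u, x u ∈ A)
    (hx0 : MvPolynomial.eval (Function.update x w ξ₀) F = 0)
    (v : V) (t : ℂ) :
    MvPolynomial.eval (Function.update (Function.update x v t) w ξ₀) F = 0 := by
  by_cases hvw : v = w
  · subst hvw
    rw [Function.update_idem]
    exact hx0
  set q := polyRestrict F (Function.update x w ξ₀) v with hq_def
  have hq_eval : ∀ s, q.eval s
      = MvPolynomial.eval (Function.update (Function.update x v s) w ξ₀) F := by
    intro s
    rw [hq_def, polyRestrict_eval, Function.update_comm hvw]
  have ht₀ : q.eval (x v) = 0 := by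
    rw [hq_eval, Function.update_eq_self]
    exact hx0
  suffices hq0 : q = 0 by
    rw [← hq_eval t, hq0, Polynomial.eval_zero]
  by_contra hq0
  set t₀ := x v with ht₀def
  have ht₀A : t₀ ∈ A := hx v
  obtain ⟨ε, hε, hball⟩ := Metric.isOpen_iff.mp hAopen t₀ ht₀A
  -- choose a radius avoiding roots of q
  set bad : Finset ℝ := q.roots.toFinset.image (fun s => dist s t₀) with hbad_def
  obtain ⟨r, hrIoo, hrbad⟩ :
      ((Set.Ioo (0:ℝ) ε) \ (bad : Set ℝ)).Nonempty :=
    ((Set.Ioo_infinite hε).diff (bad.finite_toSet)).nonempty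
  have hr0 : 0 < r := hrIoo.1
  have hrε : r < ε := hrIoo.2
  have hsub : Metric.closedBall t₀ r ⊆ A := fun s hs =>
    hball (lt_of_le_of_lt (Metric.mem_closedBall.mp hs) hrε)
  have hsphere : ∀ s ∈ Metric.sphere t₀ r, q.eval s ≠ 0 := by
    intro s hs h0
    apply hrbad
    simp only [hbad_def, Finset.coe_image, Set.mem_image, Finset.mem_coe,
      Multiset.mem_toFinset]
    exact ⟨s, Polynomial.mem_roots'.mpr ⟨hq0, h0⟩, Metric.mem_sphere.mp hs⟩
  have hcomp : IsCompact (Metric.sphere t₀ r) := isCompact_sphere _ _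
  have hnesph : (Metric.sphere t₀ r).Nonempty := NormedSpace.sphere_nonempty.mpr hr0.le
  obtain ⟨s₀, hs₀, hmin⟩ := hcomp.exists_isMinOn hnesph
    ((q.continuous.norm).continuousOn)
  set m := ‖q.eval s₀‖ with hm_def
  have hm : 0 < m := norm_pos_iff.mpr (hsphere s₀ hs₀)
  -- the two-variable polynomial function
  set h : ℂ × ℂ → ℂ := fun p =>
    MvPolynomial.eval (Function.update (Function.update x v p.2) w p.1) F with hh_def
  have hhcont : Continuous h := by
    apply (continuous_mvEval F).comp
    refine continuous_pi fun u => ?_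
    simp only [Function.update_apply]
    split_ifs
    · exact continuous_fst
    · exact continuous_snd
    · exact continuous_const
  have hq' : ∀ s, h (ξ₀, s) = q.eval s := fun s => (hq_eval s).symm
  -- uniform continuity on a compact set
  have hK : IsCompact ((Metric.closedBall ξ₀ 1) ×ˢ (Metric.sphere t₀ r)) :=
    (isCompact_closedBall _ _).prod hcomp
  have hUC := hK.uniformContinuousOn_of_continuous hhcont.continuousOn
  rw [Metric.uniformContinuousOn_iff] at hUC
  obtain ⟨δ, hδ, hδprop⟩ := hUC (m/2) (by positivity)
  -- pick ξ ∈ A close to ξ₀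
  set N : Set ℂ := {ξ : ℂ | dist ξ ξ₀ < min δ 1 ∧ ‖h (ξ, t₀)‖ < m/2} with hN_def
  have hNopen : IsOpen N := by
    apply IsOpen.inter
    · exact Metric.isOpen_ball
    · exact isOpen_lt ((hhcont.comp (continuous_id.prodMk continuous_const)).norm) continuous_const
  have hNmem : ξ₀ ∈ N := by
    constructor
    · simp only [dist_self]
      exact lt_min hδ one_pos
    · rw [hq', ht₀]
      simpa using (by positivity : (0:ℝ) < m/2)
  obtain ⟨ξ, hξN, hξA⟩ := mem_closure_iff_nhds.mp hξ₀ N (hNopen.mem_nhds hNmem)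
  have hξd : dist ξ ξ₀ < min δ 1 := hξN.1
  -- the one-variable function at ξ
  set f : ℂ → ℂ := fun s => h (ξ, s) with hf_def
  have hf_poly : f = fun s => (polyRestrict F (Function.update x w ξ) v).eval s := by
    funext s
    show MvPolynomial.eval (Function.update (Function.update x v s) w ξ) F = _
    rw [polyRestrict_eval, Function.update_comm hvw]
  have hfdiff : Differentiable ℂ f := by
    rw [hf_poly]
    exact (polyRestrict F (Function.update x w ξ) v).differentiable
  have hfne : ∀ s ∈ A, f s ≠ 0 := by
    intro s hs
    apply hF
    intro u
    rcases eq_or_ne u w with rfl | huw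
    · simpa using hξA
    rcases eq_or_ne u v with rfl | huv
    · simp only [hf_def, hh_def, Function.update_of_ne huw, Function.update_self]
      exact hs
    · simp only [hf_def, hh_def, Function.update_of_ne huw, Function.update_of_ne huv]
      exact hx u
  set g : ℂ → ℂ := fun s => (f s)⁻¹ with hg_def
  have hgd : DiffContOnCl ℂ g (Metric.ball t₀ r) := by
    constructor
    · exact (hfdiff.differentiableOn).inv
        (fun s hs => hfne s (hsub (Metric.ball_subset_closedBall hs)))
    · rw [closure_ball t₀ hr0.ne']
      exact (hfdiff.continuous.continuousOn).inv₀ (fun s hs => hfne s (hsub hs))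
  have hbound : ∀ s ∈ frontier (Metric.ball t₀ r), ‖g s‖ ≤ (m/2)⁻¹ := by
    rw [frontier_ball t₀ hr0.ne']
    intro s hs
    have h1 : dist (h (ξ, s)) (h (ξ₀, s)) < m/2 := by
      apply hδprop (ξ, s)
        ⟨Metric.mem_closedBall.mpr (le_of_lt (lt_of_lt_of_le hξd (min_le_right _ _))), hs⟩
        (ξ₀, s) ⟨Metric.mem_closedBall_self one_pos.le, hs⟩
      rw [Prod.dist_eq]
      simp only [dist_self]
      exact max_lt (hξd.trans_le (min_le_left _ _)) hδ
    have h2 : m ≤ ‖q.eval s‖ := hmin hs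
    have h3 : m/2 ≤ ‖f s‖ := by
      have h4 : ‖q.eval s‖ - ‖f s‖ ≤ dist (h (ξ, s)) (h (ξ₀, s)) := by
        rw [dist_comm, dist_eq_norm, hq']
        exact norm_sub_norm_le _ _
      linarith
    simp only [hg_def, norm_inv]
    exact inv_anti₀ (by positivity) h3
  have hfin : ‖g t₀‖ ≤ (m/2)⁻¹ :=
    Complex.norm_le_of_forall_mem_frontier_norm_le Metric.isBounded_ball hgd hbound
      (by rw [closure_ball t₀ hr0.ne']; exact Metric.mem_closedBall_self hr0.le)
  have hft₀ : f t₀ ≠ 0 := hfne t₀ ht₀A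
  have hge : m/2 ≤ ‖f t₀‖ := by
    have h5 : ‖f t₀‖⁻¹ ≤ (m/2)⁻¹ := by simpa [hg_def, norm_inv] using hfin
    have h6 : 0 < ‖f t₀‖ := norm_pos_iff.mpr hft₀
    exact (inv_le_inv₀ h6 (by positivity)).mp h5
  have hlt : ‖f t₀‖ < m/2 := hξN.2
  linarith

lemma subst_eval {V : Type*} [DecidableEq V] (F : MvPolynomial V ℂ) (w : V) (ξ₀ : ℂ)
    (y : V → ℂ) :
    MvPolynomial.eval y
        (MvPolynomial.aeval (fun u => if u = w then MvPolynomial.C ξ₀ else MvPolynomial.X u) F)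
      = MvPolynomial.eval (Function.update y w ξ₀) F := by
  have h3 : ∀ (g : V → ℂ) (p : MvPolynomial V ℂ),
      MvPolynomial.aeval g p = MvPolynomial.eval g p := fun g p => by
    rw [← MvPolynomial.coe_aeval_eq_eval]; rfl
  have h1 := MvPolynomial.comp_aeval
    (f := fun u => if u = w then MvPolynomial.C ξ₀ else MvPolynomial.X u)
    (φ := MvPolynomial.aeval (R := ℂ) y)
  have h2 := DFunLike.congr_fun h1 F
  simp only [AlgHom.coe_comp, Function.comp_apply] at h2
  calc MvPolynomial.eval y
        (MvPolynomial.aeval (fun u => if u = w then MvPolynomial.C ξ₀ else MvPolynomial.X u) F)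
      = MvPolynomial.aeval y
        (MvPolynomial.aeval (fun u => if u = w then MvPolynomial.C ξ₀ else MvPolynomial.X u) F) :=
        (h3 y _).symm
    _ = MvPolynomial.aeval (fun u => MvPolynomial.aeval y
          (if u = w then MvPolynomial.C ξ₀ else MvPolynomial.X u)) F := h2
    _ = MvPolynomial.eval (Function.update y w ξ₀) F := by
        rw [h3]
        have heq : (fun u => MvPolynomial.aeval (R := ℂ) y
            (if u = w then MvPolynomial.C ξ₀ else MvPolynomial.X u))
            = Function.update y w ξ₀ := by
          funext u
          rcases eq_or_ne u w with rfl | huw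
          · simp
          · simp [huw, Function.update_of_ne huw]
        rw [heq]

lemma mv_eval_zero_of_zero_on_set {V : Type*} [Fintype V] [DecidableEq V]
    {A : Set ℂ} (hA : A.Infinite) (P : MvPolynomial V ℂ)
    (h : ∀ y : V → ℂ, (∀ u, y u ∈ A) → MvPolynomial.eval y P = 0) :
    ∀ y : V → ℂ, MvPolynomial.eval y P = 0 := by
  have key : ∀ T : Finset V, ∀ y : V → ℂ, (∀ u ∉ T, y u ∈ A) →
      MvPolynomial.eval y P = 0 := by
    intro T
    induction T using Finset.induction_on with
    | empty => exact fun y hy => h y (fun u => hy u (Finset.notMem_empty u))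
    | @insert a T ha IH =>
      intro y hy
      set q := polyRestrict P y a with hq_def
      have hq0 : q = 0 := by
        apply Polynomial.eq_zero_of_infinite_isRoot
        apply hA.mono
        intro s hs
        show q.eval s = 0
        rw [hq_def, polyRestrict_eval]
        apply IH
        intro u hu
        rcases eq_or_ne u a with rfl | hua
        · simpa using hs
        · rw [Function.update_of_ne hua]
          exact hy u (by simp [hu, hua])
      have := polyRestrict_eval P y a (y a)
      rw [← hq_def, hq0, Function.update_eq_self] at this
      simpa using this.symm
  intro y
  exact key Finset.univ y (fun u hu => absurd (Finset.mem_univ u) hu)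

theorem boundary_specialization_nonvanishing
    {V : Type*} [Fintype V] [DecidableEq V]
    (A : Set ℂ) (hAopen : IsOpen A) (hAconn : IsConnected A)
    (F : MvPolynomial V ℂ)
    (hF : ∀ x : V → ℂ, (∀ v, x v ∈ A) → MvPolynomial.eval x F ≠ 0)
    (w : V) (ξ₀ : ℂ) (hξ₀ : ξ₀ ∈ closure A) :
    (∀ x : V → ℂ, MvPolynomial.eval (Function.update x w ξ₀) F = 0) ∨
    (∀ x : V → ℂ, (∀ v, x v ∈ A) →
      MvPolynomial.eval (Function.update x w ξ₀) F ≠ 0) := by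
  by_cases hex : ∃ x₀ : V → ℂ, (∀ u, x₀ u ∈ A) ∧
      MvPolynomial.eval (Function.update x₀ w ξ₀) F = 0
  · left
    obtain ⟨x₀, hx₀A, hx₀0⟩ := hex
    -- Stage 1: vanishing propagates to all of A^V via hurwitz_step
    have stage1 : ∀ y : V → ℂ, (∀ u, y u ∈ A) →
        MvPolynomial.eval (Function.update y w ξ₀) F = 0 := by
      have key : ∀ T : Finset V, ∀ y : V → ℂ, (∀ u, y u ∈ A) →
          (∀ u ∉ T, y u = x₀ u) →
          MvPolynomial.eval (Function.update y w ξ₀) F = 0 := by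
        intro T
        induction T using Finset.induction_on with
        | empty =>
          intro y hyA hyx
          have : y = x₀ := funext fun u => hyx u (Finset.notMem_empty u)
          rw [this]; exact hx₀0
        | @insert a T ha IH =>
          intro y hyA hyx
          set y' := Function.update y a (x₀ a) with hy'_def
          have hy'A : ∀ u, y' u ∈ A := by
            intro u
            rcases eq_or_ne u a with rfl | hua
            · simpa [hy'_def] using hx₀A u
            · simpa [hy'_def, Function.update_of_ne hua] using hyA u
          have hy'x : ∀ u ∉ T, y' u = x₀ u := by
            intro u hu
            rcases eq_or_ne u a with rfl | hua
            · simp [hy'_def]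
            · rw [hy'_def, Function.update_of_ne hua]
              exact hyx u (by simp [hu, hua])
          have h0 := IH y' hy'A hy'x
          have hstep := hurwitz_step hAopen F hF w ξ₀ hξ₀ y' hy'A h0 a (y a)
          rw [hy'_def, Function.update_idem, Function.update_eq_self] at hstep
          exact hstep
      intro y hy
      exact key Finset.univ y hy (fun u hu => absurd (Finset.mem_univ u) hu)
    -- Stage 2: polynomial identity
    have hAinf : A.Infinite := isOpen_infinite hAopen hAconn.nonempty
    set P : MvPolynomial V ℂ :=
      MvPolynomial.aeval (fun u => if u = w then MvPolynomial.C ξ₀ else MvPolynomial.X u) F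
      with hP_def
    have hP_eval : ∀ y : V → ℂ, MvPolynomial.eval y P
        = MvPolynomial.eval (Function.update y w ξ₀) F :=
      fun y => subst_eval F w ξ₀ y
    have hPzero : ∀ y : V → ℂ, MvPolynomial.eval y P = 0 :=
      mv_eval_zero_of_zero_on_set hAinf P
        (fun y hy => by rw [hP_eval]; exact stage1 y hy)
    intro x
    rw [← hP_eval]
    exact hPzero x
  · right
    push_neg at hex
    exact hex
end

section
/- Let p(y) = Σ_{k=0}^{n} a_k y^k be a real polynomial with all zeros real and nonpositive, and let θ ∈ (π/2, π]. Let q(y) = Σ_{k=0}^{n} b_k y^k be a real polynomial all of whose zeros z satisfy |arg(z)| ≥ θ (or z = 0 is excluded since the sector excludes 0). Then every zero z of Σ_{k=0}^{n} a_k b_k y^k satisfies z ∉ {w : w ≠ 0, |arg(w)| < θ}. -/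
open Polynomial Complex Finset Real

private lemma tw_coeff_esum {R : Type*} [CommRing R] (a : ℕ → R) (n i : ℕ) :
    (∑ k ∈ range (n+1), C (a k) * X ^ k).coeff i = if i ≤ n then a i else 0 := by
  rw [finset_sum_coeff]
  simp only [coeff_C_mul, coeff_X_pow, mul_ite, mul_one, mul_zero]
  rw [Finset.sum_ite_eq (range (n+1)) i a]
  simp [Nat.lt_succ_iff]

private lemma tw_eval0_iter (j : ℕ) (F : Polynomial ℂ) :
    eval 0 (derivative^[j] F) = (j.factorial : ℂ) * F.coeff j := by
  induction j generalizing F with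
  | zero => simp [← coeff_zero_eq_eval_zero]
  | succ j ih =>
      rw [Function.iterate_succ_apply, ih, coeff_derivative]
      push_cast [Nat.factorial_succ]
      ring

private lemma tw_HP (w : ℂ) : ∀ (N : ℕ) (F : Polynomial ℂ), F.natDegree ≤ N → F ≠ 0 →
    (∀ r, F.IsRoot r → (w*r).re < 0) → ∀ ζ : ℂ, 0 ≤ (w*ζ).re →
    eval ζ F ≠ 0 ∧
    0 ≤ ((starRingEnd ℂ) w * eval ζ (derivative F) * (starRingEnd ℂ) (eval ζ F)).re ∧
    (0 < F.natDegree → 0 < ((starRingEnd ℂ) w * eval ζ (derivative F) * (starRingEnd ℂ) (eval ζ F)).re) := by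
  intro N
  induction N with
  | zero =>
      intro F hdeg hF hroots ζ hζ
      obtain ⟨c, rfl⟩ := natDegree_eq_zero.mp (Nat.le_zero.mp hdeg)
      refine ⟨by simpa using fun h => hF (by rw [h, map_zero]), by simp, by simp⟩
  | succ N ih =>
      intro F hdeg hF hroots ζ hζ
      by_cases h0 : F.natDegree = 0
      · obtain ⟨c, rfl⟩ := natDegree_eq_zero.mp h0
        refine ⟨by simpa using fun h => hF (by rw [h, map_zero]), by simp, by simp⟩
      · have hdegpos : 0 < F.degree := by
          rw [Polynomial.degree_eq_natDegree hF]
          exact_mod_cast Nat.pos_of_ne_zero h0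
        obtain ⟨r, hr⟩ := Complex.exists_root hdegpos
        have hrneg : (w*r).re < 0 := hroots r hr
        set G := F /ₘ (X - C r) with hGdef
        have hFG : (X - C r) * G = F := mul_divByMonic_eq_iff_isRoot.mpr hr
        have hG : G ≠ 0 := by
          intro h; rw [h, mul_zero] at hFG; exact hF hFG.symm
        have hXr : (X - C r : Polynomial ℂ) ≠ 0 := X_sub_C_ne_zero r
        have hdegG : G.natDegree ≤ N := by
          have := natDegree_mul hXr hG
          rw [hFG, natDegree_X_sub_C] at this
          omega
        have hrootsG : ∀ z, G.IsRoot z → (w*z).re < 0 := by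
          intro z hz
          apply hroots
          rw [IsRoot, ← hFG, eval_mul, hz.eq_zero, mul_zero]
        obtain ⟨hGne, hGE, _⟩ := ih G hdegG hG hrootsG ζ hζ
        have hζr : 0 < (w*(ζ - r)).re := by
          have : (w*(ζ - r)).re = (w*ζ).re - (w*r).re := by
            rw [mul_sub, sub_re]
          rw [this]; linarith
        have hζrne : ζ - r ≠ 0 := by
          intro h; rw [h, mul_zero, zero_re] at hζr; exact lt_irrefl 0 hζr
        have hevF : eval ζ F = (ζ - r) * eval ζ G := by
          rw [← hFG, eval_mul, eval_sub, eval_X, eval_C]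
        have hevF' : eval ζ (derivative F) = eval ζ G + (ζ - r) * eval ζ (derivative G) := by
          rw [← hFG, derivative_mul, derivative_X_sub_C, one_mul, eval_add, eval_mul,
            eval_sub, eval_X, eval_C]
        have hFne : eval ζ F ≠ 0 := by
          rw [hevF]; exact mul_ne_zero hζrne hGne
        constructor
        · exact hFne
        have key : (starRingEnd ℂ) w * eval ζ (derivative F) * (starRingEnd ℂ) (eval ζ F)
            = (↑(normSq (eval ζ G)) : ℂ) * (starRingEnd ℂ) (w * (ζ - r))
              + (↑(normSq (ζ - r)) : ℂ) *
                ((starRingEnd ℂ) w * eval ζ (derivative G) * (starRingEnd ℂ) (eval ζ G)) := by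
          rw [hevF, hevF', ← Complex.mul_conj (eval ζ G), ← Complex.mul_conj (ζ - r)]
          simp only [map_mul]
          ring
        have hre : ((starRingEnd ℂ) w * eval ζ (derivative F) * (starRingEnd ℂ) (eval ζ F)).re
            = normSq (eval ζ G) * (w*(ζ - r)).re
              + normSq (ζ - r) * ((starRingEnd ℂ) w * eval ζ (derivative G) * (starRingEnd ℂ) (eval ζ G)).re := by
          rw [key, add_re, re_ofReal_mul, re_ofReal_mul, Complex.conj_re]
        have h1 : 0 < normSq (eval ζ G) * (w*(ζ - r)).re :=
          mul_pos (normSq_pos.mpr hGne) hζr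
        have h2 : 0 ≤ normSq (ζ - r) * ((starRingEnd ℂ) w * eval ζ (derivative G) * (starRingEnd ℂ) (eval ζ G)).re :=
          mul_nonneg (normSq_nonneg _) hGE
        constructor
        · rw [hre]; linarith
        · intro _; rw [hre]; linarith

private lemma tw_IT (w : ℂ) : ∀ (j : ℕ) (F : Polynomial ℂ), F ≠ 0 → j ≤ F.natDegree →
    (∀ r, F.IsRoot r → (w*r).re < 0) → ∀ ζ : ℂ, 0 ≤ (w*ζ).re →
    eval ζ (derivative^[j] F) ≠ 0 := by
  intro j
  induction j with
  | zero =>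
      intro F hF _ hroots ζ hζ
      simp only [Function.iterate_zero, id_eq]
      exact (tw_HP w F.natDegree F le_rfl hF hroots ζ hζ).1
  | succ j ih =>
      intro F hF hj hroots ζ hζ
      have hdpos : 0 < F.natDegree := lt_of_lt_of_le (Nat.succ_pos j) hj
      have hrootsF' : ∀ r, (derivative F).IsRoot r → (w*r).re < 0 := by
        intro r hr
        by_contra hcon
        push_neg at hcon
        have := (tw_HP w F.natDegree F le_rfl hF hroots r hcon).2.2 hdpos
        rw [hr.eq_zero] at this
        simp at this
      have hlc : F.coeff F.natDegree ≠ 0 := by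
        rw [← leadingCoeff]; exact leadingCoeff_ne_zero.mpr hF
      have hcoefd : (derivative F).coeff (F.natDegree - 1) ≠ 0 := by
        rw [coeff_derivative]
        have h1 : F.natDegree - 1 + 1 = F.natDegree := by omega
        rw [h1]
        apply mul_ne_zero hlc
        rw [show ((F.natDegree - 1 : ℕ) : ℂ) + 1 = ((F.natDegree : ℕ) : ℂ) by
          rw [← h1]; push_cast; ring]
        exact Nat.cast_ne_zero.mpr (by omega)
      have hF' : derivative F ≠ 0 := fun h => hcoefd (by rw [h, coeff_zero])
      have hjF' : j ≤ (derivative F).natDegree := by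
        have := le_natDegree_of_ne_zero hcoefd
        omega
      rw [Function.iterate_succ_apply]
      exact ih (derivative F) hF' hjF' hrootsF' ζ hζ

private lemma tw_cos_neg (θ φ ψ : ℝ) (hθ : π/2 < θ) (hθ' : θ ≤ π) (hφ : |φ| < θ)
    (hψl : θ ≤ |ψ|) (hψu : |ψ| ≤ π) :
    Real.cos (φ * (π/(2*θ)) - φ + ψ) < 0 := by
  have hθ0 : 0 < θ := by linarith [Real.pi_pos]
  have hδ : |φ * (π/(2*θ)) - φ| < θ - π/2 := by
    have : φ * (π/(2*θ)) - φ = φ * ((π - 2*θ)/(2*θ)) := by field_simp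
    rw [this, abs_mul]
    have h2 : |(π - 2*θ)/(2*θ)| = (2*θ - π)/(2*θ) := by
      rw [abs_div, abs_of_neg (show π - 2*θ < 0 by linarith), abs_of_pos (show (0:ℝ) < 2*θ by linarith)]
      ring
    rw [h2]
    have hc : 0 < (2*θ - π)/(2*θ) := div_pos (by linarith) (by linarith)
    calc |φ| * ((2*θ-π)/(2*θ)) < θ * ((2*θ-π)/(2*θ)) := by
          exact mul_lt_mul_of_pos_right hφ hc
      _ = θ - π/2 := by field_simp
  rw [abs_lt] at hδ
  rcases le_or_gt 0 ψ with hs | hs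
  · rw [_root_.abs_of_nonneg hs] at hψl hψu
    apply Real.cos_neg_of_pi_div_two_lt_of_lt <;> [skip; skip] <;> nlinarith
  · rw [_root_.abs_of_neg hs] at hψl hψu
    rw [← Real.cos_neg]
    apply Real.cos_neg_of_pi_div_two_lt_of_lt <;> nlinarith


private lemma tw_rootMult_le {F : Polynomial ℂ} {c : ℕ} (hc : F.coeff c ≠ 0) :
    rootMultiplicity 0 F ≤ c := by
  by_contra h
  push_neg at h
  obtain ⟨G, hG⟩ := pow_rootMultiplicity_dvd F 0
  apply hc
  rw [hG, mul_comm]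
  simp only [map_zero, sub_zero]
  rw [coeff_mul_X_pow']
  rw [if_neg (by omega)]

theorem takagi_weisner (n : ℕ) (p q : Polynomial ℝ)
    (hpd : p.natDegree ≤ n) (hqd : q.natDegree ≤ n)
    (θ : ℝ) (hθ : Real.pi / 2 < θ) (hθ' : θ ≤ Real.pi)
    (hp : ∀ z : ℂ, Polynomial.aeval z p = 0 → z.im = 0 ∧ z.re ≤ 0)
    (hq : ∀ z : ℂ, Polynomial.aeval z q = 0 → ¬(z ≠ 0 ∧ |z.arg| < θ)) :
    (∑ k ∈ Finset.range (n + 1),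
        Polynomial.C (p.coeff k * q.coeff k) * Polynomial.X ^ k) = 0 ∨
    ∀ z : ℂ, Polynomial.aeval z (∑ k ∈ Finset.range (n + 1),
        Polynomial.C (p.coeff k * q.coeff k) * Polynomial.X ^ k) = 0 →
      ¬(z ≠ 0 ∧ |z.arg| < θ) := by
  by_cases hf : (∑ k ∈ Finset.range (n + 1),
      Polynomial.C (p.coeff k * q.coeff k) * Polynomial.X ^ k) = 0
  · exact Or.inl hf
  right
  intro γ hγeval hcon
  obtain ⟨hγ0, hargγ⟩ := hcon
  -- exists k₀ with nonzero product coefficient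
  have hex : ∃ k₀, k₀ ≤ n ∧ p.coeff k₀ * q.coeff k₀ ≠ 0 := by
    by_contra hc
    push_neg at hc
    apply hf
    refine Finset.sum_eq_zero fun k hk => ?_
    rw [hc k (Nat.lt_succ_iff.mp (Finset.mem_range.mp hk)), map_zero, zero_mul]
  obtain ⟨k₀, hk₀n, hk₀⟩ := hex
  have hpk₀ : p.coeff k₀ ≠ 0 := fun h => hk₀ (by rw [h, zero_mul])
  have hqk₀ : q.coeff k₀ ≠ 0 := fun h => hk₀ (by rw [h, mul_zero])
  -- the half-plane direction
  set φ := γ.arg with hφdef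
  set χ := φ * (π/(2*θ)) with hχdef
  set w := Complex.exp (↑χ * Complex.I) with hwdef
  have hθ0 : 0 < θ := by linarith [Real.pi_pos]
  have hχlt : |χ| < π/2 := by
    rw [hχdef, abs_mul, abs_of_pos (by positivity : (0:ℝ) < π/(2*θ))]
    calc |φ| * (π/(2*θ)) < θ * (π/(2*θ)) := by
          exact mul_lt_mul_of_pos_right hargγ (by positivity)
      _ = π/2 := by field_simp
  have hcosχ : 0 < Real.cos χ := by
    apply Real.cos_pos_of_mem_Ioo
    rw [abs_lt] at hχlt
    exact Set.mem_Ioo.mpr ⟨by linarith [hχlt.1], by linarith [hχlt.2]⟩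
  -- negative real points have λ < 0
  have hreal_neg : ∀ x : ℝ, x < 0 → (w * (x:ℂ)).re < 0 := by
    intro x hx
    have : (w * (x:ℂ)).re = Real.cos χ * x := by
      rw [mul_comm, re_ofReal_mul, hwdef, exp_ofReal_mul_I_re, mul_comm]
    rw [this]
    exact mul_neg_of_pos_of_neg hcosχ hx
  -- points z₀ with arg(γ z₀) outside the sector have λ < 0
  have hsect_neg : ∀ z₀ : ℂ, z₀ ≠ 0 → θ ≤ |(γ * z₀).arg| → (w * z₀).re < 0 := by
    intro z₀ hz₀ hargβ
    have hz₀abs : 0 < ‖z₀‖ := by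
      rw [norm_pos_iff]; exact hz₀
    have hre : (w * z₀).re = ‖z₀‖ * Real.cos (χ + z₀.arg) := by
      conv_lhs => rw [← Complex.norm_mul_exp_arg_mul_I z₀]
      rw [hwdef, mul_comm (Complex.exp (↑χ * Complex.I)), mul_assoc, ← Complex.exp_add,
        re_ofReal_mul, ← add_mul, ← Complex.ofReal_add, exp_ofReal_mul_I_re]
      congr 2
      ring
    rw [hre]
    apply mul_neg_of_pos_of_neg hz₀abs
    -- cos(χ + arg z₀) = cos(χ - φ + arg(γ z₀)) via angles
    set ψ := (γ * z₀).arg with hψdef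
    have hangle : ((χ + z₀.arg : ℝ) : Real.Angle) = ((χ - φ + ψ : ℝ) : Real.Angle) := by
      have h1 : ((φ + z₀.arg : ℝ) : Real.Angle) = ((ψ : ℝ) : Real.Angle) := by
        rw [Real.Angle.coe_add, hψdef, hφdef]
        exact (Complex.arg_mul_coe_angle hγ0 hz₀).symm
      calc ((χ + z₀.arg : ℝ) : Real.Angle)
          = ((χ - φ + (φ + z₀.arg) : ℝ) : Real.Angle) := by congr 1; ring
        _ = ((χ - φ : ℝ) : Real.Angle) + ((φ + z₀.arg : ℝ) : Real.Angle) := Real.Angle.coe_add _ _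
        _ = ((χ - φ : ℝ) : Real.Angle) + ((ψ : ℝ) : Real.Angle) := by rw [h1]
        _ = ((χ - φ + ψ : ℝ) : Real.Angle) := (Real.Angle.coe_add _ _).symm
    have hcoseq : Real.cos (χ + z₀.arg) = Real.cos (χ - φ + ψ) := by
      have := congrArg Real.Angle.cos hangle
      rwa [Real.Angle.cos_coe, Real.Angle.cos_coe] at this
    rw [hcoseq]
    have : χ - φ + ψ = φ * (π/(2*θ)) - φ + ψ := by rw [hχdef]
    rw [this]
    exact tw_cos_neg θ φ ψ hθ hθ' hargγ hargβ (abs_le.mpr ⟨(Complex.neg_pi_lt_arg _).le, Complex.arg_le_pi _⟩)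
  -- define Pstar and QΓ
  set Pstar : Polynomial ℂ := ∑ k ∈ range (n+1), C ((p.coeff (n - k) : ℂ)) * X ^ k with hPdef
  set QΓ : Polynomial ℂ := ∑ k ∈ range (n+1), C ((q.coeff k : ℂ) * γ ^ k) * X ^ k with hQdef
  have hPco : ∀ i, Pstar.coeff i = if i ≤ n then ((p.coeff (n - i) : ℝ) : ℂ) else 0 := fun i =>
    tw_coeff_esum (fun k => ((p.coeff (n - k) : ℝ) : ℂ)) n i
  have hQco : ∀ i, QΓ.coeff i = if i ≤ n then ((q.coeff i : ℝ) : ℂ) * γ ^ i else 0 := fun i =>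
    tw_coeff_esum (fun k => ((q.coeff k : ℝ) : ℂ) * γ ^ k) n i
  have hPne : Pstar ≠ 0 := by
    intro h
    have := hPco (n - k₀)
    rw [h, coeff_zero] at this
    have h2 : n - (n - k₀) = k₀ := by omega
    rw [if_pos (by omega), h2] at this
    exact hpk₀ (by exact_mod_cast this.symm)
  have hQne : QΓ ≠ 0 := by
    intro h
    have := hQco k₀
    rw [h, coeff_zero, if_pos hk₀n] at this
    have : ((q.coeff k₀ : ℝ) : ℂ) = 0 ∨ γ ^ k₀ = 0 := mul_eq_zero.mp this.symm
    rcases this with h' | h'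
    · exact hqk₀ (by exact_mod_cast h')
    · exact pow_ne_zero k₀ hγ0 h'
  set Φ : Polynomial ℂ := Pstar * QΓ with hΦdef
  have hΦne : Φ ≠ 0 := mul_ne_zero hPne hQne
  -- coeff n of Φ equals the Hadamard evaluation at γ
  have haeval : Polynomial.aeval γ (∑ k ∈ Finset.range (n + 1),
      Polynomial.C (p.coeff k * q.coeff k) * Polynomial.X ^ k)
      = ∑ k ∈ range (n+1), ((p.coeff k * q.coeff k : ℝ) : ℂ) * γ ^ k := by
    rw [map_sum]
    refine Finset.sum_congr rfl fun k _ => ?_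
    simp [Algebra.algebraMap_eq_smul_one]
  have hcoeffn : Φ.coeff n = ∑ k ∈ range (n+1), ((p.coeff k * q.coeff k : ℝ) : ℂ) * γ ^ k := by
    rw [hΦdef, coeff_mul, Finset.Nat.sum_antidiagonal_eq_sum_range_succ_mk]
    have hstep : ∀ k ∈ range (n+1), Pstar.coeff k * QΓ.coeff (n - k)
        = ((p.coeff (n-k) * q.coeff (n-k) : ℝ) : ℂ) * γ ^ (n-k) := by
      intro k hk
      rw [Finset.mem_range, Nat.lt_succ_iff] at hk
      rw [hPco, hQco, if_pos hk, if_pos (by omega)]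
      push_cast
      ring
    rw [Finset.sum_congr rfl hstep]
    exact Finset.sum_range_reflect (fun k => ((p.coeff k * q.coeff k : ℝ) : ℂ) * γ ^ k) (n+1)
  have hΦn0 : Φ.coeff n = 0 := by rw [hcoeffn, ← haeval, hγeval]
  -- root multiplicity bookkeeping
  set ν := rootMultiplicity 0 Φ with hνdef
  have hPk : Pstar.coeff (n - k₀) ≠ 0 := by
    rw [hPco, if_pos (by omega), show n - (n - k₀) = k₀ by omega]
    exact_mod_cast hpk₀
  have hQk : QΓ.coeff k₀ ≠ 0 := by
    rw [hQco, if_pos hk₀n]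
    exact mul_ne_zero (by exact_mod_cast hqk₀) (pow_ne_zero _ hγ0)
  have hνn : ν ≤ n := by
    rw [hνdef, hΦdef, rootMultiplicity_mul (hΦdef ▸ hΦne)]
    have h1 := tw_rootMult_le hPk
    have h2 := tw_rootMult_le hQk
    omega
  obtain ⟨Ψ, hΨ⟩ : (X : Polynomial ℂ) ^ ν ∣ Φ := by
    have := pow_rootMultiplicity_dvd Φ 0
    simpa using this
  have hΨne : Ψ ≠ 0 := by
    intro h; rw [h, mul_zero] at hΨ; exact hΦne hΨ
  have hΨcoeff : Ψ.coeff (n - ν) = Φ.coeff n := by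
    rw [hΨ, mul_comm, coeff_mul_X_pow', if_pos hνn]
  have hΨ00 : eval 0 Ψ ≠ 0 := by
    intro h
    have hdvd : (X : Polynomial ℂ) ∣ Ψ := by
      have := dvd_iff_isRoot.mpr (show Ψ.IsRoot 0 from h)
      simpa using this
    obtain ⟨G, hG⟩ := hdvd
    have hdvd2 : (X : Polynomial ℂ) ^ (ν + 1) ∣ Φ := ⟨G, by rw [hΨ, hG, pow_succ]; ring⟩
    have hnd := pow_rootMultiplicity_not_dvd hΦne (0 : ℂ)
    simp only [map_zero, sub_zero] at hnd
    exact hnd hdvd2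
  have hΨdeg : n - ν ≤ Ψ.natDegree := by
    have hdP : n - k₀ ≤ Pstar.natDegree := le_natDegree_of_ne_zero hPk
    have hdQ : k₀ ≤ QΓ.natDegree := le_natDegree_of_ne_zero hQk
    have hdΦ : Φ.natDegree = Pstar.natDegree + QΓ.natDegree := natDegree_mul hPne hQne
    have hdΦ2 : Φ.natDegree = ν + Ψ.natDegree := by
      rw [hΨ, natDegree_mul (pow_ne_zero _ X_ne_zero) hΨne, natDegree_X_pow]
    omega
  -- roots of Ψ lie in the open half-plane
  have hΨroots : ∀ r, Ψ.IsRoot r → (w * r).re < 0 := by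
    intro r hr
    have hr0 : r ≠ 0 := by
      intro h; rw [h] at hr; exact hΨ00 hr.eq_zero
    have hΦr : eval r Pstar * eval r QΓ = 0 := by
      have : eval r Φ = 0 := by
        rw [hΨ, eval_mul, hr.eq_zero, mul_zero]
      rwa [hΦdef, eval_mul] at this
    rcases mul_eq_zero.mp hΦr with hcase | hcase
    · -- root of Pstar : r⁻¹ is a root of p
      have hev : eval r Pstar = r ^ n * (Polynomial.aeval (r⁻¹) p) := by
        rw [hPdef, eval_finset_sum]
        simp only [eval_mul, eval_C, eval_pow, eval_X]
        rw [aeval_eq_sum_range' (lt_of_le_of_lt hpd (Nat.lt_succ_self n)), Finset.mul_sum]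
        rw [← Finset.sum_range_reflect (fun k => ((p.coeff (n - k) : ℝ) : ℂ) * r ^ k) (n+1)]
        refine Finset.sum_congr rfl fun i hi => ?_
        rw [Finset.mem_range, Nat.lt_succ_iff] at hi
        rw [show n + 1 - 1 - i = n - i by omega, show n - (n - i) = i by omega]
        rw [Complex.real_smul]
        rw [show r ^ n = r ^ (n - i) * r ^ i by rw [← pow_add]; congr 1; omega]
        field_simp
        ring_nf
        simp [hr0]
      have haev : Polynomial.aeval (r⁻¹) p = 0 := by
        have hrn : r ^ n ≠ 0 := pow_ne_zero _ hr0
        rcases mul_eq_zero.mp (hev ▸ hcase) with h | h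
        · exact absurd h hrn
        · exact h
      obtain ⟨him, hre⟩ := hp (r⁻¹) haev
      have hrinv0 : r⁻¹ ≠ 0 := inv_ne_zero hr0
      set c := (r⁻¹).re with hcdef
      have hceq : (r⁻¹ : ℂ) = (c : ℂ) := by
        apply Complex.ext
        · rfl
        · simp [him]
      have hc0 : c < 0 := by
        rcases lt_or_eq_of_le hre with h | h
        · exact h
        · exfalso; apply hrinv0
          rw [hceq, h]
          simp
      have hrc : r = ((c⁻¹ : ℝ) : ℂ) := by
        rw [Complex.ofReal_inv, ← hceq, inv_inv]
      rw [hrc]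
      exact hreal_neg _ (inv_lt_zero.mpr hc0)
    · -- root of QΓ : γ * r is a root of q
      have hev : eval r QΓ = Polynomial.aeval (γ * r) q := by
        rw [hQdef, eval_finset_sum]
        simp only [eval_mul, eval_C, eval_pow, eval_X]
        rw [aeval_eq_sum_range' (lt_of_le_of_lt hqd (Nat.lt_succ_self n))]
        refine Finset.sum_congr rfl fun i _ => ?_
        rw [Complex.real_smul, mul_pow]
        ring
      have haev : Polynomial.aeval (γ * r) q = 0 := by rw [← hev]; exact hcase
      have hnotin := hq (γ * r) haev
      push_neg at hnotin
      exact hsect_neg r hr0 (hnotin (mul_ne_zero hγ0 hr0))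
  -- conclude
  have hIT := tw_IT w (n - ν) Ψ hΨne hΨdeg hΨroots 0 (by simp)
  rw [tw_eval0_iter] at hIT
  have : Ψ.coeff (n - ν) ≠ 0 := by
    intro h; apply hIT; rw [h, mul_zero]
  rw [hΨcoeff, hΦn0] at this
  exact this rfl
end

section
/- Let 1 ≤ k ≤ D−1 be integers, let R = k(D−k)/((k+1)(D−k+1)), and suppose β ≥ √2·√R. Then Γ(y) = C(D,k−1) y^{k−1} + β C(D,k) y^k + C(D,k+1) y^{k+1} is strictly S[3π/4]-nonvanishing, i.e., Γ ≢ 0 and Γ(z) ≠ 0 for all z with z ≠ 0 and |arg(z)| < 3π/4. -/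
private lemma aux_quad (a b c x y : ℝ) (ha : 0 < a) (hb : 0 < b) (hc : 0 < c)
    (hkey : 2 * (a * c) ≤ b ^ 2)
    (hre : a + b * x + c * (x * x - y * y) = 0)
    (him' : y * (b + 2 * c * x) = 0)
    (hpos : 0 < x + |y|) : False := by
  rcases mul_eq_zero.mp him' with hy0 | hbx
  · rw [hy0] at hre hpos
    simp only [abs_zero, add_zero, mul_zero, sub_zero] at hre hpos
    nlinarith [mul_pos hb hpos, mul_pos (mul_pos hc hpos) hpos]
  · have ht : 0 ≤ |y| := abs_nonneg y
    have ht2 : |y| * |y| = y * y := abs_mul_abs_self y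
    have hxneg : x < 0 := by nlinarith
    have htgt : 0 < |y| - x := by linarith
    have hA : a = c * (x * x + y * y) := by linear_combination hre - x * hbx
    have hbeq : b = -2 * c * x := by linarith
    have hy2 : y * y ≤ x * x := by nlinarith [mul_pos hc hc, hA, hkey, hbeq]
    nlinarith [mul_pos hpos htgt, ht2, hy2]

private lemma aux_cos_sin {u : ℝ} (h0 : 0 ≤ u) (h1 : u < 3 * Real.pi / 4) :
    0 < Real.cos u + Real.sin u := by
  have hpi := Real.pi_pos
  have hs : 0 < Real.sin (u + Real.pi / 4) :=
    Real.sin_pos_of_pos_of_lt_pi (by linarith) (by linarith)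
  rw [Real.sin_add, Real.cos_pi_div_four, Real.sin_pi_div_four] at hs
  have h2 : 0 < Real.sqrt 2 := by positivity
  nlinarith

theorem trinomial_sector_nonvanishing (D k : ℕ) (hk : 1 ≤ k) (hkD : k + 1 ≤ D)
    (β : ℝ)
    (hβ : Real.sqrt 2 *
      Real.sqrt ((k * ((D : ℝ) - k)) / ((k + 1) * ((D : ℝ) - k + 1))) ≤ β) :
    ∀ z : ℂ, z ≠ 0 → |z.arg| < 3 * Real.pi / 4 →
      (D.choose (k - 1) : ℂ) * z ^ (k - 1) + (β : ℂ) * (D.choose k : ℂ) * z ^ k +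
        (D.choose (k + 1) : ℂ) * z ^ (k + 1) ≠ 0 := by
  obtain ⟨n, rfl⟩ : ∃ n, k = n + 1 := ⟨k - 1, (Nat.succ_pred_eq_of_pos hk).symm⟩
  intro z hz harg
  simp only [Nat.add_sub_cancel]
  -- real coefficients
  set a : ℝ := (D.choose n : ℝ) with ha_def
  set m : ℝ := (D.choose (n + 1) : ℝ) with hm_def
  set c : ℝ := (D.choose (n + 2) : ℝ) with hc_def
  set b : ℝ := β * m with hb_def
  have hDn1 : n + 1 ≤ D := by omega
  have hDn2 : (n : ℝ) + 1 + 1 ≤ (D : ℝ) := by exact_mod_cast hkD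
  have ha : 0 < a := by rw [ha_def]; exact_mod_cast Nat.choose_pos (by omega : n ≤ D)
  have hmpos : 0 < m := by rw [hm_def]; exact_mod_cast Nat.choose_pos (by omega : n + 1 ≤ D)
  have hc : 0 < c := by rw [hc_def]; exact_mod_cast Nat.choose_pos (by omega : n + 2 ≤ D)
  -- R facts
  have hd : 0 < ((n:ℝ) + 1 + 1) * ((D : ℝ) - (n + 1) + 1) := by
    apply mul_pos (by positivity); linarith
  have hRnn : 0 ≤ ((n:ℝ)+1) * ((D : ℝ) - (n+1)) / (((n:ℝ)+1+1) * ((D : ℝ) - (n+1) + 1)) := by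
    apply div_nonneg _ hd.le
    apply mul_nonneg (by positivity); linarith
  have hβ' : Real.sqrt 2 * Real.sqrt (((n:ℝ)+1) * ((D : ℝ) - (n+1)) /
      (((n:ℝ)+1+1) * ((D : ℝ) - (n+1) + 1))) ≤ β := by
    convert hβ using 4 <;> push_cast <;> ring
  have hβpos : 0 < β := by
    rcases lt_or_eq_of_le hβ' with h | h
    · refine lt_of_le_of_lt ?_ h
      positivity
    · -- even if equal, sqrt term could be 0? then β = sqrt2*sqrt R ≥ 0; need strict? handle β=0 case later
      rw [← h]
      have hnum : 0 < ((n:ℝ)+1) * ((D : ℝ) - (n+1)) := by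
        apply mul_pos (by positivity); linarith
      have : 0 < ((n:ℝ)+1) * ((D : ℝ) - (n+1)) /
          (((n:ℝ)+1+1) * ((D : ℝ) - (n+1) + 1)) := div_pos hnum hd
      positivity
  have hβsq : 2 * (((n:ℝ)+1) * ((D : ℝ) - (n+1)) /
      (((n:ℝ)+1+1) * ((D : ℝ) - (n+1) + 1))) ≤ β ^ 2 := by
    have h0 : 0 ≤ Real.sqrt 2 * Real.sqrt (((n:ℝ)+1) * ((D : ℝ) - (n+1)) /
        (((n:ℝ)+1+1) * ((D : ℝ) - (n+1) + 1))) := by positivity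
    have := mul_self_le_mul_self h0 hβ'
    calc 2 * _ = (Real.sqrt 2 * Real.sqrt _) * (Real.sqrt 2 * Real.sqrt _) := by
          rw [mul_mul_mul_comm, Real.mul_self_sqrt (by norm_num),
            Real.mul_self_sqrt hRnn]
      _ ≤ β * β := this
      _ = β ^ 2 := (sq β).symm
  -- choose identities
  have hid1 : m * ((n:ℝ) + 1) = a * ((D:ℝ) - n) := by
    rw [hm_def, ha_def]
    have h := Nat.choose_succ_right_eq D n
    have h' : ((D.choose (n+1) * (n+1) : ℕ) : ℝ) = ((D.choose n * (D - n) : ℕ) : ℝ) := by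
      rw [h]
    push_cast [Nat.cast_sub (show n ≤ D by omega)] at h'
    linarith
  have hid2 : c * ((n:ℝ) + 2) = m * ((D:ℝ) - (n+1)) := by
    rw [hc_def, hm_def]
    have h := Nat.choose_succ_right_eq D (n+1)
    have h' : ((D.choose (n+1+1) * (n+1+1) : ℕ) : ℝ) = ((D.choose (n+1) * (D - (n+1)) : ℕ) : ℝ) := by
      rw [h]
    push_cast [Nat.cast_sub (show n + 1 ≤ D by omega)] at h'
    linarith
  have hac : a * c * (((n:ℝ)+1+1) * ((D : ℝ) - (n+1) + 1)) =
      m ^ 2 * (((n:ℝ)+1) * ((D : ℝ) - (n+1))) := by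
    linear_combination (-(c * ((n:ℝ)+2))) * hid1 + (m * ((n:ℝ)+1)) * hid2
  -- key inequality
  have hkey : 2 * (a * c) ≤ b ^ 2 := by
    have h1 := mul_le_mul_of_nonneg_right hβsq (sq_nonneg m)
    have h2 : 2 * (((n:ℝ)+1) * ((D : ℝ) - (n+1)) /
        (((n:ℝ)+1+1) * ((D : ℝ) - (n+1) + 1))) * m ^ 2 = 2 * (a * c) := by
      have hdne : ((↑n + 1 + 1) * ((D:ℝ) - (↑n + 1) + 1)) ≠ 0 := hd.ne'
      rw [mul_assoc, div_mul_eq_mul_div, ← mul_div_assoc, div_eq_iff hdne]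
      linear_combination (-2) * hac
    rw [h2] at h1
    calc 2 * (a * c) ≤ β ^ 2 * m ^ 2 := h1
      _ = b ^ 2 := by rw [hb_def]; ring
  have hb : 0 < b := mul_pos hβpos hmpos
  -- reduce to quadratic
  intro h
  have hq : (a : ℂ) + (b : ℂ) * z + (c : ℂ) * (z * z) = 0 := by
    have hzn : z ^ n ≠ 0 := pow_ne_zero _ hz
    have h' : z ^ n * ((a : ℂ) + (b : ℂ) * z + (c : ℂ) * (z * z)) = 0 := by
      rw [← h, ha_def, hb_def, hc_def, hm_def]
      push_cast
      ring
    rcases mul_eq_zero.mp h' with h'' | h''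
    · exact absurd h'' hzn
    · exact h''
  set x : ℝ := z.re with hx_def
  set y : ℝ := z.im with hy_def
  have hre : a + b * x + c * (x * x - y * y) = 0 := by
    have := congrArg Complex.re hq
    simpa [Complex.add_re, Complex.mul_re, Complex.mul_im] using this
  have him : b * y + c * (x * y + y * x) = 0 := by
    have := congrArg Complex.im hq
    simpa [Complex.add_im, Complex.mul_re, Complex.mul_im] using this
  -- sector implies x + |y| > 0
  have habs : 0 < ‖z‖ := by
    simpa [norm_pos_iff] using hz
  have hxeq : x = ‖z‖ * Real.cos z.arg := (Complex.norm_mul_cos_arg z).symm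
  have hyeq : y = ‖z‖ * Real.sin z.arg := (Complex.norm_mul_sin_arg z).symm
  have harg_le : |z.arg| ≤ Real.pi := abs_le.mpr ⟨Complex.neg_pi_lt_arg z |>.le, Complex.arg_le_pi z⟩
  have hsinabs : |Real.sin z.arg| = Real.sin |z.arg| := by
    rcases le_or_gt 0 z.arg with h0 | h0
    · rw [abs_of_nonneg h0, abs_of_nonneg]
      exact Real.sin_nonneg_of_nonneg_of_le_pi h0 (Complex.arg_le_pi z)
    · rw [abs_of_neg h0, Real.sin_neg,
        abs_of_nonpos (Real.sin_nonpos_of_nonpos_of_neg_pi_le h0.le (Complex.neg_pi_lt_arg z).le)]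
  have hcosabs : Real.cos z.arg = Real.cos |z.arg| := (Real.cos_abs z.arg).symm
  have hpos : 0 < x + |y| := by
    have h1 : x + |y| = ‖z‖ * (Real.cos |z.arg| + Real.sin |z.arg|) := by
      rw [hxeq, hyeq, abs_mul, abs_of_nonneg habs.le, hsinabs, hcosabs]
      ring
    rw [h1]
    exact mul_pos habs (aux_cos_sin (abs_nonneg _) harg)
  -- final contradiction
  have him' : y * (b + 2 * c * x) = 0 := by linear_combination him
  exact aux_quad a b c x y ha hb hc hkey hre him' hpos
end

section
/- Let F(t) = Σ_{j=0}^{d} N(j) t^j be a real polynomial with nonnegative coefficients, all of whose zeros have negative real part (or F is a nonzero constant). Then N(j)·N(j+1) ≥ N(j−1)·N(j+2) for all 1 ≤ j ≤ d−2. -/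
/-!
Over `ℝ`, a polynomial is its leading coefficient times monic factors `X + s` and
`X ^ 2 + b X + c`, and when all zeros lie in the open left half-plane, `s, b, c > 0`.
Up to the sign of the leading coefficient it therefore suffices that multiplication by such a
factor preserves positivity of the coefficients `a j` together with the Hurwitz minor
inequalities `a j * a (j + 3) ≤ a (j + 1) * a (j + 2)`. The new minors expand into nonnegative
combinations of the old ones, of products of coefficients, and of the derived inequalities
`a j * a (j + 4) ≤ a (j + 2) ^ 2` and `a j * a (j + 5) ≤ a (j + 1) * a (j + 4)`; each of these
is the product of two minors divided by the positive coefficients they share.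
-/

namespace Polynomial

section CoeffMul

variable {R : Type*} [Semiring R] (p : R[X])

theorem coeff_X_add_C_mul_succ (s : R) (k : ℕ) :
    ((X + C s) * p).coeff (k + 1) = p.coeff k + s * p.coeff (k + 1) := by
  simp [add_mul, coeff_X_mul]

theorem coeff_X_sq_add_C_mul_X_add_C_mul_one (b c : R) :
    ((X ^ 2 + C b * X + C c) * p).coeff 1 = b * p.coeff 0 + c * p.coeff 1 := by
  simp [add_mul, mul_assoc, coeff_X_mul, coeff_X_pow_mul']

theorem coeff_X_sq_add_C_mul_X_add_C_mul_add_two (b c : R) (k : ℕ) :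
    ((X ^ 2 + C b * X + C c) * p).coeff (k + 2) =
      p.coeff k + b * p.coeff (k + 1) + c * p.coeff (k + 2) := by
  simp [add_mul, mul_assoc, coeff_X_mul, coeff_X_pow_mul']

end CoeffMul

def IsHurwitzStable (F : ℝ[X]) : Prop :=
  ∀ z : ℂ, aeval z F = 0 → z.re < 0

/-- `minor_nonneg` says that the 2×2 minors `a (j+1) * a (j+2) - a j * a (j+3)` of the
Hurwitz matrix of the coefficients `a` are nonnegative. -/
structure HurwitzCoeffs (p : ℝ[X]) : Prop where
  coeff_pos : ∀ i ≤ p.natDegree, 0 < p.coeff i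
  minor_nonneg : ∀ j, p.coeff j * p.coeff (j + 3) ≤ p.coeff (j + 1) * p.coeff (j + 2)

namespace HurwitzCoeffs

variable {p : ℝ[X]}

theorem coeff_nonneg (hp : HurwitzCoeffs p) (i : ℕ) : 0 ≤ p.coeff i := by
  rcases le_or_gt i p.natDegree with hi | hi
  · exact (hp.coeff_pos i hi).le
  · rw [coeff_eq_zero_of_natDegree_lt hi]

theorem ne_zero (hp : HurwitzCoeffs p) : p ≠ 0 := fun h =>
  (hp.coeff_pos 0 (Nat.zero_le _)).ne' (by rw [h, coeff_zero])

theorem coeff_mul_coeff_add_four_le (hp : HurwitzCoeffs p) (j : ℕ) :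
    p.coeff j * p.coeff (j + 4) ≤ p.coeff (j + 2) * p.coeff (j + 2) := by
  have hnn := hp.coeff_nonneg
  rcases le_or_gt (j + 4) p.natDegree with h | h
  · have hprod := mul_le_mul (hp.minor_nonneg j) (hp.minor_nonneg (j + 1))
      (mul_nonneg (hnn _) (hnn _)) (mul_nonneg (hnn _) (hnn _))
    have hpos := mul_pos (hp.coeff_pos (j + 1) (by omega)) (hp.coeff_pos (j + 3) (by omega))
    nlinarith [hnn j, hnn (j + 4), hnn (j + 2)]
  · rw [coeff_eq_zero_of_natDegree_lt h, mul_zero]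
    exact mul_nonneg (hnn _) (hnn _)

theorem coeff_mul_coeff_add_five_le (hp : HurwitzCoeffs p) (j : ℕ) :
    p.coeff j * p.coeff (j + 5) ≤ p.coeff (j + 1) * p.coeff (j + 4) := by
  have hnn := hp.coeff_nonneg
  rcases le_or_gt (j + 5) p.natDegree with h | h
  · have hprod := mul_le_mul (hp.minor_nonneg j) (hp.minor_nonneg (j + 2))
      (mul_nonneg (hnn _) (hnn _)) (mul_nonneg (hnn _) (hnn _))
    have hpos := mul_pos (hp.coeff_pos (j + 2) (by omega)) (hp.coeff_pos (j + 3) (by omega))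
    nlinarith [hnn j, hnn (j + 5), hnn (j + 1), hnn (j + 4)]
  · rw [coeff_eq_zero_of_natDegree_lt h, mul_zero]
    exact mul_nonneg (hnn _) (hnn _)

theorem of_natDegree_eq_zero (h0 : p.natDegree = 0) (hlc : 0 < p.leadingCoeff) :
    HurwitzCoeffs p := by
  rw [leadingCoeff, h0] at hlc
  have hnn : ∀ i, 0 ≤ p.coeff i := by
    intro i
    rcases Nat.eq_zero_or_pos i with rfl | hi
    · exact hlc.le
    · rw [coeff_eq_zero_of_natDegree_lt (by omega)]
  refine ⟨fun i hi => ?_, fun j => ?_⟩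
  · obtain rfl : i = 0 := by omega
    exact hlc
  · rw [coeff_eq_zero_of_natDegree_lt (n := j + 3) (by omega), mul_zero]
    exact mul_nonneg (hnn _) (hnn _)

theorem X_add_C_mul (hp : HurwitzCoeffs p) {s : ℝ} (hs : 0 < s) :
    HurwitzCoeffs ((X + C s) * p) := by
  have hnn := hp.coeff_nonneg
  have hA0 : ((X + C s) * p).coeff 0 = s * p.coeff 0 := by simp
  have hA := coeff_X_add_C_mul_succ p s
  have hdeg : ((X + C s) * p).natDegree = p.natDegree + 1 := by
    have hq := isMonicOfDegree_X_add_one s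
    rw [hq.monic.natDegree_mul' hp.ne_zero, hq.natDegree_eq, add_comm]
  refine ⟨fun i hi => ?_, fun j => ?_⟩
  · rw [hdeg] at hi
    rcases i with _ | k
    · rw [hA0]; exact mul_pos hs (hp.coeff_pos 0 (by omega))
    · rw [hA]
      nlinarith [hp.coeff_pos k (by omega), hnn (k + 1)]
  · rcases j with _ | k
    · rw [hA0, hA 0, hA 1, hA 2]
      nlinarith [hnn 0, hnn 1, hnn 2, hnn 3,
        mul_le_mul_of_nonneg_left (hp.minor_nonneg 0) (mul_pos hs hs).le,
        mul_nonneg hs.le (mul_self_nonneg (p.coeff 1)), mul_nonneg (hnn 0) (hnn 1)]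
    · rw [hA k, hA (k + 1), hA (k + 2), show k + 1 + 3 = k + 3 + 1 by ring, hA (k + 3)]
      nlinarith [hnn k, hnn (k + 1), hnn (k + 2), hnn (k + 3), hnn (k + 4),
        mul_le_mul_of_nonneg_left (hp.minor_nonneg (k + 1)) (mul_pos hs hs).le,
        mul_le_mul_of_nonneg_left (hp.coeff_mul_coeff_add_four_le k) hs.le, hp.minor_nonneg k]

theorem quadratic_mul (hp : HurwitzCoeffs p) {b c : ℝ} (hb : 0 < b) (hc : 0 < c) :
    HurwitzCoeffs ((X ^ 2 + C b * X + C c) * p) := by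
  have hnn := hp.coeff_nonneg
  have hA0 : ((X ^ 2 + C b * X + C c) * p).coeff 0 = c * p.coeff 0 := by simp
  have hA1 := coeff_X_sq_add_C_mul_X_add_C_mul_one p b c
  have hA := coeff_X_sq_add_C_mul_X_add_C_mul_add_two p b c
  have hdeg : ((X ^ 2 + C b * X + C c) * p).natDegree = p.natDegree + 2 := by
    have hq := isMonicOfDegree_add_add_two b c
    rw [hq.monic.natDegree_mul' hp.ne_zero, hq.natDegree_eq, add_comm]
  refine ⟨fun i hi => ?_, fun j => ?_⟩
  · rw [hdeg] at hi
    have h0 := hp.coeff_pos 0 (by omega)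
    match i with
    | 0 => rw [hA0]; exact mul_pos hc h0
    | 1 => rw [hA1]; nlinarith [hnn 1, mul_pos hb h0]
    | k + 2 =>
      rw [hA]
      nlinarith [hp.coeff_pos k (by omega), hnn (k + 1), hnn (k + 2)]
  · match j with
    | 0 =>
      rw [hA0, hA1, show (0 : ℕ) + 3 = 1 + 2 by rfl, hA 0, hA 1]
      nlinarith [hnn 0, hnn 1, hnn 2, hnn 3,
        mul_le_mul_of_nonneg_left (hp.minor_nonneg 0) (mul_pos hc hc).le,
        mul_pos hb hc, mul_pos hb hb,
        mul_nonneg (mul_pos hb hc).le (mul_self_nonneg (p.coeff 1)),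
        mul_nonneg (mul_pos hb hb).le (mul_nonneg (hnn 0) (hnn 1)),
        mul_nonneg hb.le (mul_self_nonneg (p.coeff 0))]
    | 1 =>
      rw [hA1, show (1 : ℕ) + 3 = 2 + 2 by rfl, hA 0, hA 1, hA 2]
      nlinarith [hnn 0, hnn 1, hnn 2, hnn 3, hnn 4,
        mul_le_mul_of_nonneg_left (hp.minor_nonneg 1) (mul_pos hc hc).le,
        mul_le_mul_of_nonneg_left (hp.coeff_mul_coeff_add_four_le 0) (mul_pos hb hc).le,
        mul_le_mul_of_nonneg_left (hp.minor_nonneg 0) (mul_pos hb hb).le,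
        mul_nonneg hc.le (mul_nonneg (hnn 0) (hnn 3)),
        mul_nonneg hb.le (mul_self_nonneg (p.coeff 1)), mul_nonneg (hnn 0) (hnn 1)]
    | k + 2 =>
      rw [hA k, hA (k + 1), show k + 2 + 3 = k + 3 + 2 by ring, hA (k + 3),
        show k + 2 + 1 = k + 1 + 2 by ring, hA (k + 2)]
      nlinarith [mul_le_mul_of_nonneg_left (hp.minor_nonneg (k + 2)) (mul_pos hc hc).le,
        mul_le_mul_of_nonneg_left (hp.coeff_mul_coeff_add_four_le (k + 1)) (mul_pos hb hc).le,
        mul_le_mul_of_nonneg_left (hp.coeff_mul_coeff_add_five_le k) hc.le,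
        mul_le_mul_of_nonneg_left (hp.minor_nonneg (k + 1)) (mul_pos hb hb).le,
        mul_le_mul_of_nonneg_left (hp.coeff_mul_coeff_add_four_le k) hb.le, hp.minor_nonneg k]

end HurwitzCoeffs

namespace IsHurwitzStable

variable {F G : ℝ[X]}

theorem ne_zero (h : IsHurwitzStable F) : F ≠ 0 := by
  rintro rfl
  simpa using h 0 (by simp)

theorem of_dvd (h : IsHurwitzStable F) (hGF : G ∣ F) : IsHurwitzStable G := by
  obtain ⟨q, rfl⟩ := hGF
  exact fun z hz => h z (by rw [map_mul, hz, zero_mul])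

theorem neg (h : IsHurwitzStable F) : IsHurwitzStable (-F) :=
  fun z hz => h z (by simpa using hz)

theorem exists_linear_or_quadratic_dvd (h : IsHurwitzStable F) (hF : 0 < F.natDegree) :
    (∃ s > 0, X + C s ∣ F) ∨ ∃ b > 0, ∃ c > 0, X ^ 2 + C b * X + C c ∣ F := by
  obtain ⟨z, hz⟩ := IsAlgClosed.exists_aeval_eq_zero ℂ F
    (by rw [degree_eq_natDegree h.ne_zero]; exact_mod_cast hF.ne')
  have hre := h z hz
  by_cases him : z.im = 0
  · have hroot : F.IsRoot z.re := by
      rw [show z = (z.re : ℂ) from Complex.ext rfl (by simp [him]), ← Complex.coe_algebraMap,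
        aeval_algebraMap_apply] at hz
      simpa using hz
    left
    refine ⟨-z.re, by linarith, ?_⟩
    simpa [sub_eq_add_neg] using dvd_iff_isRoot.mpr hroot
  · have hz0 : z ≠ 0 := fun h0 => him (by simp [h0])
    right
    refine ⟨-(2 * z.re), by linarith, ‖z‖ ^ 2, by positivity, ?_⟩
    convert F.quadratic_dvd_of_aeval_eq_zero_im_ne_zero hz him using 1
    simp only [map_neg]
    ring

theorem hurwitzCoeffs (h : IsHurwitzStable F) (hlc : 0 < F.leadingCoeff) : HurwitzCoeffs F := by
  induction hn : F.natDegree using Nat.strong_induction_on generalizing F with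
  | _ n ih =>
  rcases Nat.eq_zero_or_pos n with rfl | hpos
  · exact .of_natDegree_eq_zero hn hlc
  have of_monic_mul : ∀ {q G m}, IsMonicOfDegree q m → 0 < m → F = q * G → HurwitzCoeffs G := by
    rintro q G m hq hm rfl
    have hG := h.of_dvd (dvd_mul_left G q)
    refine ih G.natDegree ?_ hG ?_ rfl
    · rw [← hn, hq.monic.natDegree_mul' hG.ne_zero, hq.natDegree_eq]; omega
    · rwa [leadingCoeff_monic_mul hq.monic] at hlc
  rcases h.exists_linear_or_quadratic_dvd (hn ▸ hpos) with
    ⟨s, hs, G, rfl⟩ | ⟨b, hb, c, hc, G, rfl⟩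
  · exact (of_monic_mul (isMonicOfDegree_X_add_one s) one_pos rfl).X_add_C_mul hs
  · exact (of_monic_mul (isMonicOfDegree_add_add_two b c) two_pos rfl).quadratic_mul hb hc

theorem coeff_mul_coeff_add_three_le (h : IsHurwitzStable F) (j : ℕ) :
    F.coeff j * F.coeff (j + 3) ≤ F.coeff (j + 1) * F.coeff (j + 2) := by
  rcases (leadingCoeff_ne_zero.mpr h.ne_zero).lt_or_gt with hlc | hlc
  · simpa using (h.neg.hurwitzCoeffs (by simpa using hlc)).minor_nonneg j
  · exact (h.hurwitzCoeffs hlc).minor_nonneg j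

end IsHurwitzStable

end Polynomial

theorem hurwitz_stable_coeff_inequalities_general (d : ℕ) (F : Polynomial ℝ)
    (hstable : ∀ z : ℂ, Polynomial.aeval z F = 0 → z.re < 0) :
    ∀ j : ℕ, 1 ≤ j → j ≤ d - 2 →
      F.coeff (j - 1) * F.coeff (j + 2) ≤ F.coeff j * F.coeff (j + 1) := by
  rintro (_ | j) hj -
  · omega
  · simpa [add_assoc] using Polynomial.IsHurwitzStable.coeff_mul_coeff_add_three_le hstable j

theorem hurwitz_stable_coeff_inequalities (d : ℕ) (F : Polynomial ℝ)
    (hdeg : F.natDegree ≤ d) (hF : F ≠ 0)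
    (hnonneg : ∀ j, 0 ≤ F.coeff j)
    (hstable : ∀ z : ℂ, Polynomial.aeval z F = 0 → z.re < 0) :
    ∀ j : ℕ, 1 ≤ j → j ≤ d - 2 →
      F.coeff (j - 1) * F.coeff (j + 2) ≤ F.coeff j * F.coeff (j + 1) :=
  hurwitz_stable_coeff_inequalities_general d F hstable
end

section
/- Let G = (V,E) be a finite undirected multigraph, and for H ⊆ E and v ∈ V let deg(H,v) be the degree of v in the spanning subgraph (V,H). Then every complex zero of the polynomial Σ_{H ⊆ E} (Π_{v∈V} C(deg(G,v), deg(H,v))^{−1}) t^{#H} has modulus exactly 1. -/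
open Polynomial Finset

namespace UnimodProof


lemma key_sq {w r : ℂ} (hw : ‖w‖ < 1) (hr : 1 ≤ ‖r‖) :
    ‖1 - (starRingEnd ℂ) w * r‖ ≤ ‖w - r‖ := by
  have h1 : Complex.normSq w < 1 := by
    have := Complex.sq_norm w ▸ (by nlinarith [norm_nonneg w] : (‖w‖)^2 < 1)
    linarith [this]
  have h2 : (1:ℝ) ≤ Complex.normSq r := by
    have := Complex.sq_norm r
    nlinarith [norm_nonneg r]
  have e1 : Complex.normSq (1 - (starRingEnd ℂ) w * r)
      = 1 - 2 * (w * (starRingEnd ℂ) r).re + Complex.normSq w * Complex.normSq r := by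
    simp [Complex.normSq_sub, Complex.normSq_mul, Complex.normSq_conj, Complex.mul_re,
      Complex.conj_re, Complex.conj_im, Complex.normSq_apply]
    ring
  have e2 : Complex.normSq (w - r)
      = Complex.normSq w - 2 * (w * (starRingEnd ℂ) r).re + Complex.normSq r := by
    simp [Complex.normSq_sub, Complex.mul_re, Complex.conj_re, Complex.conj_im,
      Complex.normSq_apply]
    ring
  have : Complex.normSq (1 - (starRingEnd ℂ) w * r) ≤ Complex.normSq (w - r) := by
    rw [e1, e2]; nlinarith
  have := (Real.sqrt_le_sqrt this)
  simpa [Complex.norm_def] using this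

lemma key_sq2 {u w : ℂ} (hu : ‖u‖ < 1) (hw : ‖w‖ < 1) :
    ‖u - w‖ < ‖1 - u * (starRingEnd ℂ) w‖ := by
  have h1 : Complex.normSq u < 1 := by
    have := Complex.sq_norm u; nlinarith [norm_nonneg u]
  have h2 : Complex.normSq w < 1 := by
    have := Complex.sq_norm w; nlinarith [norm_nonneg w]
  have e1 : Complex.normSq (1 - u * (starRingEnd ℂ) w)
      = 1 - 2 * (u * (starRingEnd ℂ) w).re + Complex.normSq u * Complex.normSq w := by
    simp [Complex.normSq_sub, Complex.normSq_mul, Complex.normSq_conj, Complex.mul_re,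
      Complex.conj_re, Complex.conj_im, Complex.normSq_apply]
    ring
  have e2 : Complex.normSq (u - w)
      = Complex.normSq u - 2 * (u * (starRingEnd ℂ) w).re + Complex.normSq w := by
    simp [Complex.normSq_sub, Complex.mul_re, Complex.conj_re, Complex.conj_im,
      Complex.normSq_apply]
    ring
  have h : Complex.normSq (u - w) < Complex.normSq (1 - u * (starRingEnd ℂ) w) := by
    rw [e1, e2]; nlinarith
  have := Real.sqrt_lt_sqrt (Complex.normSq_nonneg _) h
  simpa [Complex.norm_def] using this



variable {u w r : ℂ}

-- assume key_sq, key_sq2 (proved elsewhere); restate locally with sorry to develop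
lemma halfplane {u w r : ℂ} (hu : ‖u‖ < 1) (hw : ‖w‖ < 1)
    (hr : 1 ≤ ‖r‖) :
    0 < ((starRingEnd ℂ) (1 - u * (starRingEnd ℂ) w) * ((u - r) / (w - r))).re := by
  have hwr : w - r ≠ 0 := by
    intro h
    have : w = r := by linear_combination h
    rw [this] at hw; linarith
  set c : ℂ := 1 - u * (starRingEnd ℂ) w with hc
  set z : ℂ := (u - r) / (w - r) with hz
  set a : ℂ := 1 - w * (starRingEnd ℂ) w with ha
  have haR : a = ((1 - Complex.normSq w : ℝ) : ℂ) := by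
    rw [ha, Complex.mul_conj]; push_cast; ring
  have hapos : (0:ℝ) < 1 - Complex.normSq w := by
    have := Complex.sq_norm w; nlinarith [norm_nonneg w]
  -- identity : a * z - c = (u - w) * (1 - (conj w) * r) / (w - r)
  have hid : a * z - c = (u - w) * ((1 - (starRingEnd ℂ) w * r) / (w - r)) := by
    rw [hz, ha, hc]
    field_simp
    ring
  have hkey : ‖a * z - c‖ ≤ ‖u - w‖ := by
    rw [hid]
    rw [norm_mul, norm_div]
    have h1 := key_sq hw hr
    have h2 : (0:ℝ) < ‖w - r‖ := by
      simpa [norm_pos_iff] using hwr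
    calc ‖u - w‖ * (‖1 - (starRingEnd ℂ) w * r‖ / ‖w - r‖)
        ≤ ‖u - w‖ * 1 := by
          apply mul_le_mul_of_nonneg_left _ (norm_nonneg _)
          rw [div_le_one h2]; exact h1
      _ = ‖u - w‖ := by ring
  have hcu : ‖u - w‖ < ‖c‖ := key_sq2 hu hw
  -- now positivity
  have hre : ((starRingEnd ℂ) c * (a * z)).re
      = Complex.normSq c + ((starRingEnd ℂ) c * (a * z - c)).re := by
    have : (starRingEnd ℂ) c * (a * z) = (starRingEnd ℂ) c * c + (starRingEnd ℂ) c * (a * z - c) := by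
      ring
    rw [this, Complex.add_re]
    congr 1
    rw [mul_comm, Complex.mul_conj]
    simp
  have hlow : -(‖c‖ * ‖u - w‖) ≤ ((starRingEnd ℂ) c * (a * z - c)).re := by
    have h1 : |((starRingEnd ℂ) c * (a * z - c)).re| ≤ ‖(starRingEnd ℂ) c * (a * z - c)‖ :=
      Complex.abs_re_le_norm _
    have h2 : ‖(starRingEnd ℂ) c * (a * z - c)‖
        = ‖c‖ * ‖a * z - c‖ := by
      rw [norm_mul]; simp
    have h3 : ‖c‖ * ‖a * z - c‖ ≤ ‖c‖ * ‖u - w‖ :=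
      mul_le_mul_of_nonneg_left hkey (norm_nonneg _)
    have := neg_abs_le (((starRingEnd ℂ) c * (a * z - c)).re)
    linarith [abs_nonneg (((starRingEnd ℂ) c * (a * z - c)).re)]
  have hpos : 0 < ((starRingEnd ℂ) c * (a * z)).re := by
    rw [hre]
    have hnsq : Complex.normSq c = ‖c‖ * ‖c‖ := by
      rw [Complex.normSq_eq_norm_sq]; ring
    nlinarith [norm_nonneg c, norm_nonneg (u - w)]
  -- a is a positive real scalar
  have : ((starRingEnd ℂ) c * (a * z)).re = (1 - Complex.normSq w) * ((starRingEnd ℂ) c * z).re := by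
    rw [haR]
    rw [show (starRingEnd ℂ) c * (((1 - Complex.normSq w : ℝ):ℂ) * z)
        = ((1 - Complex.normSq w : ℝ):ℂ) * ((starRingEnd ℂ) c * z) by ring]
    rw [Complex.re_ofReal_mul]
  rw [this] at hpos
  by_contra hle
  push_neg at hle
  nlinarith


lemma eval_derivative_multiset (a : ℂ) :
    ∀ (M : Multiset ℂ), ∀ w : ℂ, (∀ r ∈ M, w ≠ r) →
      eval w (derivative (C a * (M.map (fun r => X - C r)).prod)) =
      eval w (C a * (M.map (fun r => X - C r)).prod) * (M.map (fun r => (w - r)⁻¹)).sum := by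
  intro M
  induction M using Multiset.induction with
  | empty => intro w _; simp
  | cons r M ih =>
    intro w hw
    have hwr : w - r ≠ 0 := sub_ne_zero.2 (hw r (Multiset.mem_cons_self _ _))
    have hrest : ∀ s ∈ M, w ≠ s := fun s hs => hw s (Multiset.mem_cons_of_mem hs)
    have hrw : C a * ((r ::ₘ M).map (fun r => X - C r)).prod
        = (X - C r) * (C a * (M.map (fun r => X - C r)).prod) := by
      rw [Multiset.map_cons, Multiset.prod_cons]; ring
    rw [hrw, derivative_mul]
    simp only [derivative_sub, derivative_X, derivative_C, sub_zero, one_mul]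
    rw [eval_add, eval_mul, eval_mul, eval_sub, eval_X, eval_C]
    rw [ih w hrest]
    rw [Multiset.map_cons, Multiset.sum_cons]
    simp only [eval_mul, eval_sub, eval_X, eval_C]
    field_simp

lemma multiset_re_sum_nonneg (M : Multiset ℂ) (h : ∀ x ∈ M, 0 < x.re) : 0 ≤ M.sum.re := by
  induction M using Multiset.induction with
  | empty => simp
  | cons r M ih =>
    rw [Multiset.sum_cons, Complex.add_re]
    have := h r (Multiset.mem_cons_self _ _)
    have h2 := ih (fun x hx => h x (Multiset.mem_cons_of_mem hx))
    linarith

lemma multiset_prod_one_le (M : Multiset ℝ) (h : ∀ x ∈ M, 1 ≤ x) : 1 ≤ M.prod := by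
  induction M using Multiset.induction with
  | empty => simp
  | cons r M ih =>
    rw [Multiset.prod_cons]
    have h1 := h r (Multiset.mem_cons_self _ _)
    have h2 := ih (fun x hx => h x (Multiset.mem_cons_of_mem hx))
    nlinarith



lemma conj_re_pos {u w : ℂ} (hu : ‖u‖ < 1) (hw : ‖w‖ < 1) :
    0 < ((starRingEnd ℂ) (1 - u * (starRingEnd ℂ) w)).re := by
  have h : ((starRingEnd ℂ) (1 - u * (starRingEnd ℂ) w)).re = (1 - u * (starRingEnd ℂ) w).re := by
    rw [Complex.conj_re]
  rw [h]
  have habs : ‖u * (starRingEnd ℂ) w‖ < 1 := by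
    rw [norm_mul]
    simp only [Complex.norm_conj]
    nlinarith [norm_nonneg u, norm_nonneg w]
  have h4 : |(u * (starRingEnd ℂ) w).re| < 1 := lt_of_le_of_lt (Complex.abs_re_le_norm _) habs
  have h5 := abs_lt.mp h4
  simp only [Complex.sub_re, Complex.one_re]
  linarith [h5.2]

lemma multiset_re_sum_pos (M : Multiset ℂ) (hM : M ≠ 0) (h : ∀ x ∈ M, 0 < x.re) :
    0 < M.sum.re := by
  obtain ⟨r, hr⟩ := Multiset.exists_mem_of_ne_zero hM
  obtain ⟨M', rfl⟩ := Multiset.exists_cons_of_mem hr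
  rw [Multiset.sum_cons, Complex.add_re]
  have h1 := h r (Multiset.mem_cons_self _ _)
  have h2 := multiset_re_sum_nonneg M' (fun x hx => h x (Multiset.mem_cons_of_mem hx))
  linarith

lemma laguerre {ρ : ℝ} (hρ : 0 < ρ) {n : ℕ} (hn : 1 ≤ n) {g : Polynomial ℂ}
    (hdeg : g.natDegree ≤ n) (hg : ∀ z : ℂ, ‖z‖ < ρ → eval z g ≠ 0)
    {u w : ℂ} (hu : ‖u‖ < ρ) (hw : ‖w‖ < ρ) :
    (n : ℂ) * eval w g + (u - w) * eval w (derivative g) ≠ 0 := by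
  have hg0 : g ≠ 0 := by
    intro h
    exact hg 0 (by simpa using hρ) (by simp [h])
  have hs : Splits g := IsAlgClosed.splits g
  have hfac : g = C g.leadingCoeff * (g.roots.map fun a => X - C a).prod :=
    hs.eq_prod_roots
  have hcard : g.roots.card = g.natDegree := (splits_iff_card_roots).mp hs
  set M := g.roots with hM
  have hroots : ∀ r ∈ M, ρ ≤ ‖r‖ := by
    intro r hrM
    by_contra hlt
    push_neg at hlt
    exact hg r hlt (isRoot_of_mem_roots hrM)
  have hwne : ∀ r ∈ M, w ≠ r := by
    intro r hrM h
    have := hroots r hrM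
    rw [← h] at this; linarith
  have hWR : ∀ r ∈ M, w - r ≠ 0 := fun r hr => sub_ne_zero.2 (hwne r hr)
  have hevalw : eval w g ≠ 0 := hg w hw
  have hder : eval w (derivative g) = eval w g * (M.map (fun r => (w - r)⁻¹)).sum := by
    conv_lhs => rw [hfac]
    rw [eval_derivative_multiset _ _ _ hwne, ← hfac]
  rw [hder]
  have hm : M.card ≤ n := hcard ▸ hdeg
  set B : ℂ := (n : ℂ) + (u - w) * (M.map (fun r => (w - r)⁻¹)).sum with hB
  have hfact : (n : ℂ) * eval w g + (u - w) * (eval w g * (M.map (fun r => (w - r)⁻¹)).sum)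
      = eval w g * B := by rw [hB]; ring
  rw [hfact]
  apply mul_ne_zero hevalw
  -- show B ≠ 0 via halfplane
  have hBsplit : B = ((n - M.card : ℕ) : ℂ) + (M.map (fun r => (u - r) / (w - r))).sum := by
    rw [hB]
    have hcast : ((n - M.card : ℕ) : ℂ) = (n : ℂ) - (M.card : ℂ) := by
      push_cast [Nat.cast_sub hm]; ring
    rw [hcast]
    have h1 : (M.map (fun r => (u - r) / (w - r))).sum
        = (M.map (fun r => 1 + (u - w) * (w - r)⁻¹)).sum := by
      congr 1
      apply Multiset.map_congr rfl
      intro r hr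
      field_simp [hWR r hr]
      try ring
    rw [h1]
    have h2 : (M.map (fun r => 1 + (u - w) * (w - r)⁻¹)).sum
        = (M.card : ℂ) + (u - w) * (M.map (fun r => (w - r)⁻¹)).sum := by
      rw [Multiset.sum_map_add]
      congr 1
      · simp [Multiset.map_const']
      · rw [← Multiset.sum_map_mul_left]
    rw [h2]; ring
  intro hB0
  -- multiply by conj c
  set c : ℂ := 1 - (u / ρ) * (starRingEnd ℂ) (w / ρ) with hc
  have hu' : ‖u / ρ‖ < 1 := by
    rw [norm_div, Complex.norm_real, Real.norm_eq_abs, abs_of_pos hρ, div_lt_one hρ]; exact hu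
  have hw' : ‖w / ρ‖ < 1 := by
    rw [norm_div, Complex.norm_real, Real.norm_eq_abs, abs_of_pos hρ, div_lt_one hρ]; exact hw
  have hterm : ∀ r ∈ M, 0 < ((starRingEnd ℂ) c * ((u - r) / (w - r))).re := by
    intro r hr
    have hr' : 1 ≤ ‖r / ρ‖ := by
      rw [norm_div, Complex.norm_real, Real.norm_eq_abs, abs_of_pos hρ, le_div_iff₀ hρ, one_mul]
      exact hroots r hr
    have hratio : (u - r) / (w - r) = (u / ρ - r / ρ) / (w / ρ - r / ρ) := by
      have hρ0 : (ρ : ℂ) ≠ 0 := by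
        simpa using ne_of_gt hρ
      rw [div_sub_div_same, div_sub_div_same]
      rw [div_div_div_cancel_right₀]
      exact hρ0
    rw [hratio, hc]
    exact halfplane hu' hw' hr'
  have hcre : 0 < ((starRingEnd ℂ) c).re := conj_re_pos hu' hw'
  have hresum0 : ∀ x ∈ M.map (fun r => (starRingEnd ℂ) c * ((u - r) / (w - r))), 0 < x.re := by
    intro x hx
    obtain ⟨r, hr, rfl⟩ := Multiset.mem_map.mp hx
    exact hterm r hr
  have hfinal : 0 < ((starRingEnd ℂ) c * B).re := by
    rw [hBsplit, mul_add, Complex.add_re]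
    rw [← Multiset.sum_map_mul_left]
    have hre1 : ((starRingEnd ℂ) c * ((n - Multiset.card M : ℕ) : ℂ)).re
        = ((n - Multiset.card M : ℕ) : ℝ) * ((starRingEnd ℂ) c).re := by
      rw [mul_comm, show (((n - Multiset.card M : ℕ) : ℂ)) = (((n - Multiset.card M : ℕ) : ℝ) : ℂ) by push_cast; ring,
        Complex.re_ofReal_mul]
    rw [hre1]
    by_cases hM0 : M = 0
    · have hnm : n - Multiset.card M = n := by simp [hM0]
      rw [hM0]
      simp only [Multiset.map_zero, Multiset.sum_zero, Complex.zero_re, add_zero, hnm]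
      have : (0:ℝ) < (n:ℝ) := by exact_mod_cast hn
      positivity
    · have h1 : 0 < ((M.map (fun r => (starRingEnd ℂ) c * ((u - r) / (w - r)))).sum).re :=
        multiset_re_sum_pos _ (by simpa using hM0) hresum0
      have h2 : 0 ≤ ((n - Multiset.card M : ℕ) : ℝ) * ((starRingEnd ℂ) c).re := by
        positivity
      linarith
  rw [hB0] at hfinal
  simp at hfinal



lemma lead_le_eval_zero {ρ : ℝ} (hρ : 1 ≤ ρ) {g : Polynomial ℂ} (hg0 : g ≠ 0)
    (hg : ∀ z : ℂ, ‖z‖ < ρ → eval z g ≠ 0) :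
    ‖g.leadingCoeff‖ ≤ ‖eval 0 g‖ := by
  have hs : Splits g := IsAlgClosed.splits g
  have hfac : g = C g.leadingCoeff * (g.roots.map fun a => X - C a).prod :=
    hs.eq_prod_roots
  have heval : eval 0 g = g.leadingCoeff * ((g.roots.map fun a => (0 : ℂ) - a)).prod := by
    conv_lhs => rw [hfac]
    rw [eval_mul, eval_C, eval_multiset_prod]
    congr 2
    rw [Multiset.map_map]
    apply Multiset.map_congr rfl
    intro r _
    simp
  rw [heval, norm_mul]
  have h1 : (1:ℝ) ≤ ‖(g.roots.map fun a => (0:ℂ) - a).prod‖ := by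
    rw [show ‖(g.roots.map fun a => (0:ℂ) - a).prod‖
        = ((g.roots.map fun a => (0:ℂ) - a).map norm).prod by
      exact (Multiset.prod_hom _ (normHom : ℂ →*₀ ℝ)).symm
      ]
    apply multiset_prod_one_le
    intro x hx
    rw [Multiset.map_map] at hx
    obtain ⟨r, hr, rfl⟩ := Multiset.mem_map.mp hx
    have hroot : ρ ≤ ‖r‖ := by
      by_contra hlt
      push_neg at hlt
      exact hg r hlt (isRoot_of_mem_roots hr)
    simp only [Function.comp_apply, zero_sub, norm_neg]
    linarith
  nlinarith [norm_nonneg g.leadingCoeff, norm_nonneg (((g.roots.map fun a => (0:ℂ) - a)).prod)]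

lemma bigT {ρ : ℝ} (hρ : 1 < ρ) :
    ∀ (d : ℕ) (g : Polynomial ℂ), g.natDegree ≤ d →
      (∀ z : ℂ, ‖z‖ < ρ → eval z g ≠ 0) →
      (∑ k ∈ Finset.range (d + 1), g.coeff k * ((d.choose k : ℕ) : ℂ)⁻¹) ≠ 0 := by
  intro d
  induction d with
  | zero =>
    intro g _ hg
    simpa [coeff_zero_eq_eval_zero] using hg 0 (by simpa using (by linarith : (0:ℝ) < ρ))
  | succ d ih =>
    intro g hdeg hg
    intro h0
    have hb0 : g.coeff 0 ≠ 0 := by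
      rw [coeff_zero_eq_eval_zero]
      exact hg 0 (by simpa using (by linarith : (0:ℝ) < ρ))
    set btop : ℂ := g.coeff (d + 1) with hbtop
    set u : ℂ := -btop / g.coeff 0 with hu
    have huabs : ‖u‖ ≤ 1 := by
      by_cases hbt : btop = 0
      · simp [hu, hbt]
      · have hnd : g.natDegree = d + 1 :=
          le_antisymm hdeg (le_natDegree_of_ne_zero hbt)
        have hlead : g.leadingCoeff = btop := by
          rw [leadingCoeff, hnd]
        have hg0 : g ≠ 0 := fun h => hbt (by simp [hbtop, h])
        have := lead_le_eval_zero (le_of_lt hρ) hg0 hg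
        rw [hlead, ← coeff_zero_eq_eval_zero] at this
        rw [hu, norm_div, norm_neg]
        rw [div_le_one (norm_pos_iff.mpr hb0)]
        exact this
    have huρ : ‖u‖ < ρ := lt_of_le_of_lt huabs hρ
    set h : Polynomial ℂ := C (((d+1 : ℕ)) : ℂ) * g + (C u - X) * derivative g with hh
    have hcoeff : ∀ k : ℕ, h.coeff k
        = (((d : ℂ) + 1) - k) * g.coeff k + u * ((k : ℂ) + 1) * g.coeff (k+1) := by
      intro k
      rw [hh, coeff_add, coeff_C_mul, sub_mul, coeff_sub, coeff_C_mul, coeff_derivative]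
      cases k with
      | zero =>
        simp [coeff_derivative]
      | succ k =>
        rw [coeff_X_mul, coeff_derivative]
        push_cast
        ring
    have hdeg' : h.natDegree ≤ d := by
      rw [natDegree_le_iff_coeff_eq_zero]
      intro m hm
      rw [hcoeff]
      have hm1 : d + 1 ≤ m := hm
      have hc2 : g.coeff (m+1) = 0 := by
        apply coeff_eq_zero_of_natDegree_lt
        omega
      rcases eq_or_lt_of_le hm1 with heq | hlt
      · subst heq
        rw [hc2]
        push_cast
        try ring
      · have hc1 : g.coeff m = 0 := by
          apply coeff_eq_zero_of_natDegree_lt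
          omega
        rw [hc1, hc2]
        ring
    have hg' : ∀ z : ℂ, ‖z‖ < ρ → eval z h ≠ 0 := by
      intro z hz
      have : eval z h = ((d+1 : ℕ) : ℂ) * eval z g + (u - z) * eval z (derivative g) := by
        rw [hh]
        simp only [eval_add, eval_mul, eval_sub, eval_C, eval_X]
        try push_cast
        try ring
      rw [this]
      exact laguerre (by linarith : (0:ℝ) < ρ) (Nat.le_add_left 1 d) hdeg hg huρ hz
    have hTh := ih h hdeg' hg'
    apply hTh
    have hch1 : ∀ k ∈ Finset.range (d+1),
        h.coeff k * ((d.choose k : ℕ) : ℂ)⁻¹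
        = ((d+1 : ℕ) : ℂ) * (g.coeff k * (((d+1).choose k : ℕ) : ℂ)⁻¹)
          + u * ((d+1 : ℕ) : ℂ) * (g.coeff (k+1) * (((d+1).choose (k+1) : ℕ) : ℂ)⁻¹) := by
      intro k hk
      have hkd : k ≤ d := by simpa using Nat.lt_succ_iff.mp (Finset.mem_range.mp hk)
      have n2 : (d+1) * d.choose k = (d+1).choose (k+1) * (k+1) :=
        Nat.add_one_mul_choose_eq d k
      have n1 : (d + 1 - k) * ((d+1).choose k) = (d+1) * d.choose k := by
        calc (d+1-k) * ((d+1).choose k) = (d+1).choose k * (d+1-k) := mul_comm _ _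
          _ = (d+1).choose (k+1) * (k+1) := (Nat.choose_succ_right_eq (d+1) k).symm
          _ = (d+1) * d.choose k := n2.symm
      have hCd : ((d.choose k : ℕ) : ℂ) ≠ 0 := Nat.cast_ne_zero.mpr (Nat.choose_pos hkd).ne'
      have hCd1 : (((d+1).choose k : ℕ) : ℂ) ≠ 0 :=
        Nat.cast_ne_zero.mpr (Nat.choose_pos (by omega)).ne'
      have hCd2 : (((d+1).choose (k+1) : ℕ) : ℂ) ≠ 0 :=
        Nat.cast_ne_zero.mpr (Nat.choose_pos (by omega)).ne'
      have id1 : (((d : ℂ) + 1) - k) * ((d.choose k : ℕ) : ℂ)⁻¹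
          = ((d+1 : ℕ) : ℂ) * (((d+1).choose k : ℕ) : ℂ)⁻¹ := by
        have hcast : ((d : ℂ) + 1) - k = ((d + 1 - k : ℕ) : ℂ) := by
          rw [Nat.cast_sub (by omega : k ≤ d + 1)]
          push_cast
          ring
        rw [hcast]
        field_simp
        exact_mod_cast n1.trans (mul_comm _ _)
      have id2 : ((k : ℂ) + 1) * ((d.choose k : ℕ) : ℂ)⁻¹
          = ((d+1 : ℕ) : ℂ) * (((d+1).choose (k+1) : ℕ) : ℂ)⁻¹ := by
        field_simp
        exact_mod_cast (show ((k+1) * ((d+1).choose (k+1)) : ℕ) = (d+1) * d.choose k by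
          rw [mul_comm]; exact n2.symm).trans (mul_comm _ _)
      rw [hcoeff k]
      linear_combination (g.coeff k) * id1 + (u * g.coeff (k+1)) * id2
    have hsum1 : ∑ k ∈ Finset.range (d+1), g.coeff k * (((d+1).choose k : ℕ) : ℂ)⁻¹
        = - btop := by
      have := Finset.sum_range_succ
        (fun k => g.coeff k * (((d+1).choose k : ℕ) : ℂ)⁻¹) (d+1)
      rw [h0] at this
      simp only [Nat.choose_self, Nat.cast_one, inv_one, mul_one] at this
      rw [hbtop]
      linear_combination -this
    have hsum2 : ∑ k ∈ Finset.range (d+1), g.coeff (k+1) * (((d+1).choose (k+1) : ℕ) : ℂ)⁻¹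
        = - g.coeff 0 := by
      have := Finset.sum_range_succ'
        (fun k => g.coeff k * (((d+1).choose k : ℕ) : ℂ)⁻¹) (d+1)
      rw [h0] at this
      simp only [Nat.choose_zero_right, Nat.cast_one, inv_one, mul_one] at this
      linear_combination -this
    calc ∑ k ∈ Finset.range (d+1), h.coeff k * ((d.choose k : ℕ) : ℂ)⁻¹
        = ∑ k ∈ Finset.range (d+1),
            (((d+1 : ℕ) : ℂ) * (g.coeff k * (((d+1).choose k : ℕ) : ℂ)⁻¹)
              + u * ((d+1 : ℕ) : ℂ) * (g.coeff (k+1) * (((d+1).choose (k+1) : ℕ) : ℂ)⁻¹)) :=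
          Finset.sum_congr rfl hch1
      _ = ((d+1 : ℕ) : ℂ) * (∑ k ∈ Finset.range (d+1), g.coeff k * (((d+1).choose k : ℕ) : ℂ)⁻¹)
          + u * ((d+1 : ℕ) : ℂ) * (∑ k ∈ Finset.range (d+1), g.coeff (k+1) * (((d+1).choose (k+1) : ℕ) : ℂ)⁻¹) := by
          rw [Finset.sum_add_distrib, Finset.mul_sum, Finset.mul_sum]
      _ = ((d+1 : ℕ) : ℂ) * (-btop) + u * ((d+1 : ℕ) : ℂ) * (- g.coeff 0) := by
          rw [hsum1, hsum2]
      _ = 0 := by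
          have hu0 : u * g.coeff 0 = -btop := by
            rw [hu]
            field_simp
          linear_combination (-((d+1 : ℕ) : ℂ)) * hu0



variable {V E : Type*} [Fintype V] [Fintype E] [DecidableEq V] [DecidableEq E]
  (fst snd : E → V) (deg : Finset E → V → ℕ)

lemma main_nonvanish
    (hdeg : ∀ (H : Finset E) (v : V), deg H v =
      (H.filter (fun e => fst e = v)).card + (H.filter (fun e => snd e = v)).card)
    (t : ℂ) (ht : ‖t‖ < 1) (ht0 : t ≠ 0) :
    (∑ H ∈ (Finset.univ : Finset E).powerset,
      (∏ v : V, (((deg Finset.univ v).choose (deg H v) : ℕ) : ℂ)⁻¹) * t ^ H.card) ≠ 0 := by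
  classical
  set ep : E × Bool → V := fun h => if h.2 then snd h.1 else fst h.1 with hep
  set G : Finset V → (E × Bool → ℂ) → ℂ := fun W y =>
    ∑ H ∈ (Finset.univ : Finset E).powerset,
      t ^ H.card * (∏ v ∈ W, (((deg Finset.univ v).choose (deg H v) : ℕ) : ℂ)⁻¹)
        * ∏ h : E × Bool, (if h.1 ∈ H ∧ ep h ∉ W then y h else 1) with hG
  -- radius
  set ρ : ℝ := Real.sqrt (‖t‖)⁻¹ with hρdef
  have htpos : 0 < ‖t‖ := norm_pos_iff.mpr ht0
  have hρ1 : 1 < ρ := by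
    rw [hρdef]
    have h1 : (1:ℝ) < (‖t‖)⁻¹ := by
      rw [lt_inv_comm₀] <;> simp [htpos, ht]
    calc (1:ℝ) = Real.sqrt 1 := by simp
      _ < Real.sqrt (‖t‖)⁻¹ := by
        apply Real.sqrt_lt_sqrt <;> norm_num [h1]
  have hρsq : ρ ^ 2 = (‖t‖)⁻¹ := by
    rw [hρdef, Real.sq_sqrt (by positivity)]
  -- degree bound
  have hdegle : ∀ (H : Finset E) (v : V), deg H v ≤ deg Finset.univ v := by
    intro H v
    rw [hdeg, hdeg]
    exact add_le_add
      (Finset.card_le_card (Finset.filter_subset_filter _ (Finset.subset_univ H)))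
      (Finset.card_le_card (Finset.filter_subset_filter _ (Finset.subset_univ H)))
  -- counting halfedges
  have hcount : ∀ (H : Finset E) (v : V),
      (Finset.univ.filter (fun h : E × Bool => ep h = v ∧ h.1 ∈ H)).card = deg H v := by
    intro H v
    rw [hdeg]
    rw [Finset.card_filter, Fintype.sum_prod_type]
    have hbool : ∀ e : E, ∑ b : Bool, (if ep (e, b) = v ∧ e ∈ H then 1 else 0)
        = (if fst e = v ∧ e ∈ H then 1 else 0) + (if snd e = v ∧ e ∈ H then 1 else 0) := by
      intro e
      rw [Fintype.sum_bool]
      simp only [hep]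
      norm_num
      ring
    rw [Finset.sum_congr rfl (fun e _ => hbool e), Finset.sum_add_distrib]
    congr 1
    · rw [Finset.card_filter]
      calc (∑ x : E, if fst x = v ∧ x ∈ H then 1 else 0)
          = ∑ x ∈ H, (if fst x = v ∧ x ∈ H then 1 else 0) :=
            (Finset.sum_subset (Finset.subset_univ H) (fun x _ hx => by simp [hx])).symm
        _ = ∑ i ∈ H, if fst i = v then 1 else 0 :=
            Finset.sum_congr rfl (fun x hx => by simp [hx])
    · rw [Finset.card_filter]
      calc (∑ x : E, if snd x = v ∧ x ∈ H then 1 else 0)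
          = ∑ x ∈ H, (if snd x = v ∧ x ∈ H then 1 else 0) :=
            (Finset.sum_subset (Finset.subset_univ H) (fun x _ hx => by simp [hx])).symm
        _ = ∑ i ∈ H, if snd i = v then 1 else 0 :=
            Finset.sum_congr rfl (fun x hx => by simp [hx])
  -- base case identity
  have hbase : ∀ y : E × Bool → ℂ, G ∅ y = ∏ e : E, (t * (y (e,false) * y (e,true)) + 1) := by
    intro y
    rw [hG, Finset.prod_add]
    simp only [Finset.prod_empty, mul_one, Finset.notMem_empty, not_false_iff, and_true,
      Finset.prod_const_one]
    apply Finset.sum_congr rfl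
    intro H hH
    have hprod : (∏ h : E × Bool, if h.1 ∈ H then y h else 1)
        = ∏ e ∈ H, (y (e,false) * y (e,true)) := by
      rw [Fintype.prod_prod_type]
      have : ∀ e : E, (∏ b : Bool, if e ∈ H then y (e,b) else 1)
          = (if e ∈ H then y (e,false) * y (e,true) else 1) := by
        intro e
        rw [Fintype.prod_bool]
        by_cases he : e ∈ H <;> simp [he, mul_comm]
      rw [Finset.prod_congr rfl (fun e _ => this e)]
      rw [Finset.prod_ite_mem, Finset.univ_inter]
    have hRHS : ∏ i ∈ H, (t * (y (i,false) * y (i,true)))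
        = t ^ H.card * ∏ e ∈ H, (y (e,false) * y (e,true)) := by
      rw [Finset.prod_mul_distrib, Finset.prod_const]
    rw [hprod, hRHS]
  -- the key induction
  have hkey : ∀ (W : Finset V) (y : E × Bool → ℂ),
      (∀ h, ‖y h‖ < ρ) → G W y ≠ 0 := by
    intro W
    induction W using Finset.induction_on with
    | empty =>
      intro y hy
      rw [hbase y]
      apply Finset.prod_ne_zero_iff.mpr
      intro e _
      intro hzero
      have h1 : t * (y (e,false) * y (e,true)) = -1 := by linear_combination hzero
      have h2 : ‖t * (y (e,false) * y (e,true))‖ < 1 := by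
        rw [norm_mul, norm_mul]
        have b1 := hy (e,false); have b2 := hy (e,true)
        have hρpos : (0:ℝ) < ρ := by linarith
        calc ‖t‖ * (‖y (e,false)‖ * ‖y (e,true)‖)
            < ‖t‖ * (ρ * ρ) := by
              apply mul_lt_mul_of_pos_left _ htpos
              apply mul_lt_mul'' b1 b2 (norm_nonneg _) (norm_nonneg _)
          _ = ‖t‖ * ρ^2 := by ring
          _ = 1 := by rw [hρsq]; field_simp
      rw [h1] at h2
      simp at h2
    | @insert v W hvW ih =>
      intro y hy
      set d : ℕ := deg Finset.univ v with hd
      set b : ℕ → ℂ := fun k =>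
        ∑ H ∈ (Finset.univ : Finset E).powerset.filter (fun H => deg H v = k),
          t ^ H.card * (∏ u ∈ W, (((deg Finset.univ u).choose (deg H u) : ℕ) : ℂ)⁻¹)
            * ∏ h : E × Bool, (if h.1 ∈ H ∧ ep h ∉ insert v W then y h else 1) with hb
      set g : Polynomial ℂ := ∑ k ∈ Finset.range (d+1), C (b k) * X ^ k with hgdef
      have hgcoeff : ∀ k, k ∈ Finset.range (d+1) → g.coeff k = b k := by
        intro k hk
        rw [hgdef, Polynomial.finset_sum_coeff]
        rw [Finset.sum_congr rfl (fun j _ => by rw [coeff_C_mul, coeff_X_pow])]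
        simp only [mul_ite, mul_one, mul_zero]
        rw [Finset.sum_ite_eq (Finset.range (d+1)) k b]
        simp [hk]
      have hgdeg : g.natDegree ≤ d := by
        apply Polynomial.natDegree_sum_le_of_forall_le
        intro k hk
        exact le_trans (Polynomial.natDegree_C_mul_X_pow_le (b k) k)
          (by simpa using Nat.lt_succ_iff.mp (Finset.mem_range.mp hk))
      -- splitting the halfedge product
      have hsplit : ∀ (H : Finset E) (z : ℂ),
          (∏ h : E × Bool, (if h.1 ∈ H ∧ ep h ∉ W then (if ep h = v then z else y h) else 1))
          = z ^ deg H v * ∏ h : E × Bool, (if h.1 ∈ H ∧ ep h ∉ insert v W then y h else 1) := by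
        intro H z
        rw [← Finset.prod_filter_mul_prod_filter_not Finset.univ (fun h : E × Bool => ep h = v)]
        have hA : (∏ h ∈ Finset.univ.filter (fun h : E × Bool => ep h = v),
            (if h.1 ∈ H ∧ ep h ∉ W then (if ep h = v then z else y h) else 1))
            = z ^ deg H v := by
          have step1 : ∀ h ∈ Finset.univ.filter (fun h : E × Bool => ep h = v),
              (if h.1 ∈ H ∧ ep h ∉ W then (if ep h = v then z else y h) else 1)
              = (if h.1 ∈ H then z else 1) := by
            intro h hh
            have hhv : ep h = v := (Finset.mem_filter.mp hh).2
            rw [hhv]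
            simp [hvW]
          rw [Finset.prod_congr rfl step1, Finset.prod_ite, Finset.prod_const,
            Finset.prod_const_one, mul_one, Finset.filter_filter]
          rw [hcount H v]
        have hB : (∏ h ∈ Finset.univ.filter (fun h : E × Bool => ¬ ep h = v),
            (if h.1 ∈ H ∧ ep h ∉ W then (if ep h = v then z else y h) else 1))
            = ∏ h : E × Bool, (if h.1 ∈ H ∧ ep h ∉ insert v W then y h else 1) := by
          rw [← Finset.prod_filter_mul_prod_filter_not Finset.univ
            (fun h : E × Bool => ep h = v)
            (fun h => if h.1 ∈ H ∧ ep h ∉ insert v W then y h else 1)]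
          have h1 : (∏ h ∈ Finset.univ.filter (fun h : E × Bool => ep h = v),
              (if h.1 ∈ H ∧ ep h ∉ insert v W then y h else 1)) = 1 := by
            apply Finset.prod_eq_one
            intro h hh
            have hhv : ep h = v := (Finset.mem_filter.mp hh).2
            rw [hhv]
            simp
          rw [h1, one_mul]
          apply Finset.prod_congr rfl
          intro h hh
          have hhv : ¬ ep h = v := (Finset.mem_filter.mp hh).2
          simp [hhv, Finset.mem_insert]
        rw [hA, hB]
      -- diagonal identity
      have hdiag : ∀ z : ℂ, eval z g
          = G W (fun h => if ep h = v then z else y h) := by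
        intro z
        have e1 : eval z g = ∑ k ∈ Finset.range (d+1), b k * z ^ k := by
          rw [hgdef]
          rw [Polynomial.eval_finset_sum]
          apply Finset.sum_congr rfl
          intro k _
          simp
        rw [e1, hG]
        simp only []
        rw [← Finset.sum_fiberwise_of_maps_to
          (fun (H : Finset E) _ => Finset.mem_range.mpr (Nat.lt_succ_of_le (hdegle H v))
            : ∀ H ∈ (Finset.univ : Finset E).powerset, deg H v ∈ Finset.range (d+1))]
        apply Finset.sum_congr rfl
        intro k _
        rw [hb]
        rw [Finset.sum_mul]
        apply Finset.sum_congr rfl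
        intro H hH
        have hHk : deg H v = k := (Finset.mem_filter.mp hH).2
        rw [hsplit H z, ← hHk]
        ring
      -- functional identity
      have hfunc : G (insert v W) y
          = ∑ k ∈ Finset.range (d+1), (((d.choose k : ℕ)) : ℂ)⁻¹ * b k := by
        rw [hG]
        simp only []
        rw [← Finset.sum_fiberwise_of_maps_to
          (fun (H : Finset E) _ => Finset.mem_range.mpr (Nat.lt_succ_of_le (hdegle H v))
            : ∀ H ∈ (Finset.univ : Finset E).powerset, deg H v ∈ Finset.range (d+1))]
        apply Finset.sum_congr rfl
        intro k _
        rw [hb, Finset.mul_sum]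
        apply Finset.sum_congr rfl
        intro H hH
        have hHk : deg H v = k := (Finset.mem_filter.mp hH).2
        rw [Finset.prod_insert hvW, ← hHk, hd]
        ring
      -- nonvanishing of g on the disc
      have hgnz : ∀ z : ℂ, ‖z‖ < ρ → eval z g ≠ 0 := by
        intro z hz
        rw [hdiag z]
        apply ih
        intro h
        by_cases hhv : ep h = v <;> simp [hhv, hz, hy h]
      have hT := bigT hρ1 d g hgdeg hgnz
      rw [hfunc]
      intro hzero
      apply hT
      rw [Finset.sum_congr rfl (fun k hk => by rw [hgcoeff k hk])]
      rw [← hzero]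
      apply Finset.sum_congr rfl
      intro k _
      ring
  -- conclude
  have hfin := hkey Finset.univ (fun _ => 1) (fun h => by simpa using hρ1)
  rw [hG] at hfin
  simp only [Finset.mem_univ, not_true_eq_false, and_false, if_false,
    Finset.prod_const_one, mul_one] at hfin
  intro hzero
  apply hfin
  rw [← hzero]
  apply Finset.sum_congr rfl
  intro H _
  ring


end UnimodProof

theorem reciprocal_binomial_weighted_subgraph_polynomial_unimodular
    {V E : Type*} [Fintype V] [Fintype E] [DecidableEq V] [DecidableEq E]
    (fst snd : E → V)
    (deg : Finset E → V → ℕ)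
    (hdeg : ∀ (H : Finset E) (v : V), deg H v =
      (H.filter (fun e => fst e = v)).card + (H.filter (fun e => snd e = v)).card) :
    ∀ z : ℂ,
      (∑ H ∈ (Finset.univ : Finset E).powerset,
        (∏ v : V, ((((deg Finset.univ v).choose (deg H v) : ℕ)) : ℂ)⁻¹) *
          z ^ H.card) = 0 →
      ‖z‖ = 1 := by
  classical
  intro z hz
  by_contra hne
  have hdegle : ∀ (H : Finset E) (v : V), deg H v ≤ deg Finset.univ v := by
    intro H v
    rw [hdeg, hdeg]
    exact add_le_add
      (Finset.card_le_card (Finset.filter_subset_filter _ (Finset.subset_univ H)))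
      (Finset.card_le_card (Finset.filter_subset_filter _ (Finset.subset_univ H)))
  rcases lt_or_gt_of_ne hne with hlt | hgt
  · rcases eq_or_ne z 0 with rfl | hz0
    · have hone : (∑ H ∈ (Finset.univ : Finset E).powerset,
          (∏ v : V, ((((deg Finset.univ v).choose (deg H v) : ℕ)) : ℂ)⁻¹) *
            (0:ℂ) ^ H.card) = 1 := by
        rw [Finset.sum_eq_single (∅ : Finset E)]
        · have hdeg0 : ∀ v : V, deg ∅ v = 0 := by
            intro v; rw [hdeg]; simp
          simp [hdeg0]
        · intro H _ hne'
          have hc : H.card ≠ 0 := by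
            simpa [Finset.card_eq_zero] using hne'
          rw [zero_pow hc, mul_zero]
        · intro habs
          exact absurd (Finset.mem_powerset.mpr (Finset.empty_subset _)) habs
      rw [hz] at hone
      exact one_ne_zero hone.symm
    · exact UnimodProof.main_nonvanish fst snd deg hdeg z hlt hz0 hz
  · have hz0 : z ≠ 0 := by
      intro h; rw [h] at hgt; simp at hgt
      linarith
    have hzi0 : z⁻¹ ≠ 0 := inv_ne_zero hz0
    have hzi : ‖z⁻¹‖ < 1 := by
      rw [norm_inv]
      rw [inv_lt_one_iff₀]
      right; exact hgt
    -- palindromy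
    set c : Finset E → ℂ := fun H => ∏ v : V, ((((deg Finset.univ v).choose (deg H v) : ℕ)) : ℂ)⁻¹ with hcdef
    have hcompl : ∀ (H : Finset E) (v : V),
        deg (Finset.univ \ H) v = deg Finset.univ v - deg H v := by
      intro H v
      rw [hdeg, hdeg, hdeg]
      have h1 : (Finset.univ \ H).filter (fun e => fst e = v)
          = (Finset.univ.filter (fun e => fst e = v)) \ (H.filter (fun e => fst e = v)) := by
        ext e; simp [Finset.mem_sdiff, Finset.mem_filter]; tauto
      have h2 : (Finset.univ \ H).filter (fun e => snd e = v)
          = (Finset.univ.filter (fun e => snd e = v)) \ (H.filter (fun e => snd e = v)) := by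
        ext e; simp [Finset.mem_sdiff, Finset.mem_filter]; tauto
      rw [h1, h2, Finset.card_sdiff_of_subset (Finset.filter_subset_filter _ (Finset.subset_univ H)),
        Finset.card_sdiff_of_subset (Finset.filter_subset_filter _ (Finset.subset_univ H))]
      have e1 : (H.filter (fun e => fst e = v)).card
          ≤ (Finset.univ.filter (fun e => fst e = v)).card :=
        Finset.card_le_card (Finset.filter_subset_filter _ (Finset.subset_univ H))
      have e2 : (H.filter (fun e => snd e = v)).card
          ≤ (Finset.univ.filter (fun e => snd e = v)).card :=
        Finset.card_le_card (Finset.filter_subset_filter _ (Finset.subset_univ H))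
      omega
    have hccompl : ∀ H : Finset E, c (Finset.univ \ H) = c H := by
      intro H
      rw [hcdef]
      apply Finset.prod_congr rfl
      intro v _
      rw [hcompl H v, Nat.choose_symm (hdegle H v)]
    set m : ℕ := Fintype.card E with hm
    have hcard : ∀ H : Finset E, H ∈ (Finset.univ : Finset E).powerset →
        (Finset.univ \ H).card = m - H.card := by
      intro H _
      rw [Finset.card_sdiff_of_subset (Finset.subset_univ H), Finset.card_univ]
    have hpal : (∑ H ∈ (Finset.univ : Finset E).powerset, c H * z ^ H.card)
        = z ^ m * ∑ H ∈ (Finset.univ : Finset E).powerset, c H * (z⁻¹) ^ H.card := by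
      rw [Finset.mul_sum]
      apply Finset.sum_bij' (fun (H : Finset E) (_ : H ∈ (Finset.univ : Finset E).powerset) => Finset.univ \ H)
        (fun (H : Finset E) (_ : H ∈ (Finset.univ : Finset E).powerset) => Finset.univ \ H)
      · intro H hH
        exact Finset.mem_powerset.mpr (Finset.subset_univ _)
      · intro H hH
        exact Finset.mem_powerset.mpr (Finset.subset_univ _)
      · intro H hH
        exact Finset.sdiff_sdiff_eq_self (Finset.subset_univ H)
      · intro H hH
        exact Finset.sdiff_sdiff_eq_self (Finset.subset_univ H)
      · intro H hH
        rw [hccompl H, hcard H hH]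
        have hle : H.card ≤ m := by
          rw [hm, ← Finset.card_univ]
          exact Finset.card_le_card (Finset.subset_univ H)
        rw [inv_pow, pow_sub₀ z hz0 hle]
        field_simp
    rw [hpal] at hz
    rcases mul_eq_zero.mp hz with h | h
    · exact pow_ne_zero m hz0 h
    · exact UnimodProof.main_nonvanish fst snd deg hdeg z⁻¹ hzi hzi0 h
end

section
/- Let G = (V,E) be a finite undirected multigraph and for each j let N(j) = N_0^1(G,j) be the number of matchings of G with exactly j edges. Then the univariate polynomial Σ_j N(j) t^j has only real, strictly negative zeros (when it is nonconstant), and consequently N(j)² > N(j−1)·N(j+1) whenever N(j) > 0 and 1 ≤ j. -/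
set_option linter.unusedSectionVars false
set_option maxHeartbeats 1000000

open Polynomial Finset


open Polynomial

noncomputable def HLQ (t : Multiset ℝ) : Polynomial ℝ := (t.map (fun r => X + C r)).prod

lemma HLQ_zero : HLQ 0 = 1 := by simp [HLQ]

lemma HLQ_cons (a : ℝ) (t : Multiset ℝ) : HLQ (a ::ₘ t) = (X + C a) * HLQ t := by
  simp [HLQ]

lemma HLQ_coeff_cons (a : ℝ) (t : Multiset ℝ) (k : ℕ) :
    (HLQ (a ::ₘ t)).coeff (k+1) = (HLQ t).coeff k + a * (HLQ t).coeff (k+1) := by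
  simp [HLQ_cons, add_mul, coeff_X_mul, coeff_C_mul]

lemma HLQ_coeff_cons_zero (a : ℝ) (t : Multiset ℝ) :
    (HLQ (a ::ₘ t)).coeff 0 = a * (HLQ t).coeff 0 := by
  simp [HLQ_cons, add_mul, coeff_C_mul, coeff_zero_eq_eval_zero]

lemma HLQ_monic (t : Multiset ℝ) : (HLQ t).Monic :=
  monic_multiset_prod_of_monic t _ (fun r _ => monic_X_add_C r)

lemma HLQ_natDegree (t : Multiset ℝ) : (HLQ t).natDegree = Multiset.card t := by
  induction t using Multiset.induction_on with
  | empty => simp [HLQ_zero]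
  | cons a t ih =>
    rw [HLQ_cons, natDegree_mul (X_add_C_ne_zero a) (HLQ_monic t).ne_zero,
      natDegree_X_add_C, ih]
    simp [add_comm]

lemma HLQ_coeff_eq_zero (t : Multiset ℝ) (k : ℕ) (hk : Multiset.card t < k) :
    (HLQ t).coeff k = 0 :=
  coeff_eq_zero_of_natDegree_lt (by rw [HLQ_natDegree]; exact hk)

lemma HLQ_coeff_nonneg (t : Multiset ℝ) (ht : ∀ x ∈ t, 0 < x) (k : ℕ) :
    0 ≤ (HLQ t).coeff k := by
  induction t using Multiset.induction_on generalizing k with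
  | empty =>
    rcases k with _ | k <;> simp [HLQ_zero, coeff_one]
  | cons a t ih =>
    have ha : 0 < a := ht a (Multiset.mem_cons_self a t)
    have ht' : ∀ x ∈ t, 0 < x := fun x hx => ht x (Multiset.mem_cons_of_mem hx)
    rcases k with _ | k
    · rw [HLQ_coeff_cons_zero]
      exact mul_nonneg ha.le (ih ht' 0)
    · rw [HLQ_coeff_cons]
      exact add_nonneg (ih ht' k) (mul_nonneg ha.le (ih ht' (k+1)))

lemma HLQ_coeff_pos (t : Multiset ℝ) (ht : ∀ x ∈ t, 0 < x) (k : ℕ)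
    (hk : k ≤ Multiset.card t) : 0 < (HLQ t).coeff k := by
  induction t using Multiset.induction_on generalizing k with
  | empty =>
    have : k = 0 := by simpa using hk
    subst this
    simp [HLQ_zero]
  | cons a t ih =>
    have ha : 0 < a := ht a (Multiset.mem_cons_self a t)
    have ht' : ∀ x ∈ t, 0 < x := fun x hx => ht x (Multiset.mem_cons_of_mem hx)
    rcases k with _ | k
    · rw [HLQ_coeff_cons_zero]
      exact mul_pos ha (ih ht' 0 (Nat.zero_le _))
    · rw [HLQ_coeff_cons]
      have hk' : k ≤ Multiset.card t := by
        rw [Multiset.card_cons] at hk; omega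
      exact add_pos_of_pos_of_nonneg (ih ht' k hk')
        (mul_nonneg ha.le (HLQ_coeff_nonneg t ht' (k+1)))

lemma HLQ_logconcave (t : Multiset ℝ) (ht : ∀ x ∈ t, 0 < x) (k : ℕ) :
    (HLQ t).coeff k * (HLQ t).coeff (k+2) ≤ ((HLQ t).coeff (k+1))^2 := by
  induction t using Multiset.induction_on generalizing k with
  | empty =>
    have h2 : (HLQ 0).coeff (k+2) = 0 := by simp [HLQ_zero, coeff_one]
    rw [h2, mul_zero]
    positivity
  | cons a t ih =>
    have ha : 0 < a := ht a (Multiset.mem_cons_self a t)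
    have ht' : ∀ x ∈ t, 0 < x := fun x hx => ht x (Multiset.mem_cons_of_mem hx)
    have hnn : ∀ m, 0 ≤ (HLQ t).coeff m := HLQ_coeff_nonneg t ht'
    rcases k with _ | k
    · rw [HLQ_coeff_cons_zero, HLQ_coeff_cons, HLQ_coeff_cons]
      show a * (HLQ t).coeff 0 * ((HLQ t).coeff 1 + a * (HLQ t).coeff 2) ≤
        ((HLQ t).coeff 0 + a * (HLQ t).coeff 1)^2
      have h0 : (HLQ t).coeff 0 * (HLQ t).coeff 2 ≤ ((HLQ t).coeff 1)^2 := by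
        simpa using ih ht' 0
      nlinarith [mul_le_mul_of_nonneg_left h0 (mul_pos ha ha).le,
        mul_nonneg (mul_nonneg ha.le (hnn 0)) (hnn 1), sq_nonneg ((HLQ t).coeff 0)]
    · rw [HLQ_coeff_cons, HLQ_coeff_cons, HLQ_coeff_cons]
      show ((HLQ t).coeff k + a * (HLQ t).coeff (k+1)) *
          ((HLQ t).coeff (k+2) + a * (HLQ t).coeff (k+3)) ≤
        ((HLQ t).coeff (k+1) + a * (HLQ t).coeff (k+2))^2
      have h1 : (HLQ t).coeff k * (HLQ t).coeff (k+2) ≤ ((HLQ t).coeff (k+1))^2 :=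
        ih ht' k
      have h2 : (HLQ t).coeff (k+1) * (HLQ t).coeff (k+3) ≤ ((HLQ t).coeff (k+2))^2 := by
        have := ih ht' (k+1)
        convert this using 3 <;> omega
      have hmid : (HLQ t).coeff k * (HLQ t).coeff (k+3) ≤
          (HLQ t).coeff (k+1) * (HLQ t).coeff (k+2) := by
        by_cases hc : k + 2 ≤ Multiset.card t
        · have p1 : 0 < (HLQ t).coeff (k+1) := HLQ_coeff_pos t ht' _ (by omega)
          have p2 : 0 < (HLQ t).coeff (k+2) := HLQ_coeff_pos t ht' _ hc
          nlinarith [hnn k, hnn (k+3)]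
        · have h3 : (HLQ t).coeff (k+3) = 0 := HLQ_coeff_eq_zero t _ (by omega)
          rw [h3, mul_zero]
          exact mul_nonneg (hnn (k+1)) (hnn (k+2))
      nlinarith [mul_le_mul_of_nonneg_left hmid ha.le,
        mul_le_mul_of_nonneg_left h2 (mul_pos ha ha).le, h1]

lemma HLQ_logconcave_strict (t : Multiset ℝ) (ht : ∀ x ∈ t, 0 < x) (k : ℕ)
    (hk : k + 1 ≤ Multiset.card t) :
    (HLQ t).coeff k * (HLQ t).coeff (k+2) < ((HLQ t).coeff (k+1))^2 := by
  induction t using Multiset.induction_on generalizing k with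
  | empty => simp at hk
  | cons a t ih =>
    have ha : 0 < a := ht a (Multiset.mem_cons_self a t)
    have ht' : ∀ x ∈ t, 0 < x := fun x hx => ht x (Multiset.mem_cons_of_mem hx)
    have hnn : ∀ m, 0 ≤ (HLQ t).coeff m := HLQ_coeff_nonneg t ht'
    rcases k with _ | k
    · rw [HLQ_coeff_cons_zero, HLQ_coeff_cons, HLQ_coeff_cons]
      show a * (HLQ t).coeff 0 * ((HLQ t).coeff 1 + a * (HLQ t).coeff 2) <
        ((HLQ t).coeff 0 + a * (HLQ t).coeff 1)^2
      have h0 : (HLQ t).coeff 0 * (HLQ t).coeff 2 ≤ ((HLQ t).coeff 1)^2 := by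
        simpa using HLQ_logconcave t ht' 0
      have p0 : 0 < (HLQ t).coeff 0 := HLQ_coeff_pos t ht' 0 (Nat.zero_le _)
      nlinarith [mul_le_mul_of_nonneg_left h0 (mul_pos ha ha).le,
        mul_nonneg (mul_nonneg ha.le (hnn 0)) (hnn 1)]
    · rw [HLQ_coeff_cons, HLQ_coeff_cons, HLQ_coeff_cons]
      show ((HLQ t).coeff k + a * (HLQ t).coeff (k+1)) *
          ((HLQ t).coeff (k+2) + a * (HLQ t).coeff (k+3)) <
        ((HLQ t).coeff (k+1) + a * (HLQ t).coeff (k+2))^2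
      rw [Multiset.card_cons] at hk
      by_cases hc : k + 2 ≤ Multiset.card t
      · have h1 : (HLQ t).coeff k * (HLQ t).coeff (k+2) ≤ ((HLQ t).coeff (k+1))^2 :=
          HLQ_logconcave t ht' k
        have h2 : (HLQ t).coeff (k+1) * (HLQ t).coeff (k+3) < ((HLQ t).coeff (k+2))^2 := by
          have := ih ht' (k+1) hc
          convert this using 3 <;> omega
        have hmid : (HLQ t).coeff k * (HLQ t).coeff (k+3) ≤
            (HLQ t).coeff (k+1) * (HLQ t).coeff (k+2) := by
          have p1 : 0 < (HLQ t).coeff (k+1) := HLQ_coeff_pos t ht' _ (by omega)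
          have p2 : 0 < (HLQ t).coeff (k+2) := HLQ_coeff_pos t ht' _ hc
          have h2' := HLQ_logconcave t ht' (k+1)
          nlinarith [hnn k, hnn (k+3)]
        nlinarith [mul_le_mul_of_nonneg_left hmid ha.le,
          mul_lt_mul_of_pos_left h2 (mul_pos ha ha), h1]
      · have z2 : (HLQ t).coeff (k+2) = 0 := HLQ_coeff_eq_zero t _ (by omega)
        have z3 : (HLQ t).coeff (k+3) = 0 := HLQ_coeff_eq_zero t _ (by omega)
        have p1 : 0 < (HLQ t).coeff (k+1) := HLQ_coeff_pos t ht' _ (by omega)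
        rw [z2, z3]
        nlinarith [hnn k]


open Finset

section HL
variable {V E : Type*} [Fintype V] [DecidableEq V] [DecidableEq E] (fst snd : E → V)

def degc (H : Finset E) (w : V) : ℕ :=
  (H.filter (fun e => fst e = w)).card + (H.filter (fun e => snd e = w)).card

def isM (H : Finset E) : Prop := ∀ w, degc fst snd H w ≤ 1

instance : DecidablePred (isM fst snd) := fun _ => by unfold isM; infer_instance

def Ms (S : Finset E) : Finset (Finset E) := S.powerset.filter (isM fst snd)

lemma mem_Ms {S H : Finset E} : H ∈ Ms fst snd S ↔ H ⊆ S ∧ isM fst snd H := by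
  simp [Ms, mem_filter, mem_powerset]

noncomputable def mp (S : Finset E) (z : ℂ) : ℂ := ∑ H ∈ Ms fst snd S, z ^ H.card

def delv (S : Finset E) (v : V) : Finset E :=
  S.filter (fun e => fst e ≠ v ∧ snd e ≠ v)

def inc (S : Finset E) (v : V) : Finset E :=
  S.filter (fun e => (fst e = v ∨ snd e = v) ∧ fst e ≠ snd e)

def other (e : E) (v : V) : V := if fst e = v then snd e else fst e

lemma delv_subset (S : Finset E) (v : V) : delv fst snd S v ⊆ S := filter_subset _ _

lemma degc_mono {H' H : Finset E} (h : H' ⊆ H) (w : V) :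
    degc fst snd H' w ≤ degc fst snd H w :=
  Nat.add_le_add (card_le_card (filter_subset_filter _ h))
    (card_le_card (filter_subset_filter _ h))

lemma degc_insert {e : E} {H : Finset E} (he : e ∉ H) (w : V) :
    degc fst snd (insert e H) w =
      degc fst snd H w + (if fst e = w then 1 else 0) + (if snd e = w then 1 else 0) := by
  unfold degc
  have hne1 : e ∉ H.filter (fun f => fst f = w) := fun hc => he (mem_filter.mp hc).1
  have hne2 : e ∉ H.filter (fun f => snd f = w) := fun hc => he (mem_filter.mp hc).1
  rw [filter_insert, filter_insert]
  split_ifs <;>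
    simp [card_insert_of_notMem hne1, card_insert_of_notMem hne2] <;> omega

lemma two_edges {H : Finset E} {e f : E} (he : e ∈ H) (hf : f ∈ H) (hne : e ≠ f) {w : V}
    (hew : fst e = w ∨ snd e = w) (hfw : fst f = w ∨ snd f = w) :
    2 ≤ degc fst snd H w := by
  have key : ∀ (P : E → Prop) (_ : DecidablePred P) (g : E), g ∈ H → P g →
      1 ≤ (H.filter P).card := fun P _ g hg hPg =>
    card_pos.mpr ⟨g, mem_filter.mpr ⟨hg, hPg⟩⟩
  unfold degc
  rcases hew with h1 | h1 <;> rcases hfw with h2 | h2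
  · have hsub : ({e, f} : Finset E) ⊆ H.filter (fun e => fst e = w) := by
      intro g hg
      rcases mem_insert.mp hg with rfl | hg
      · exact mem_filter.mpr ⟨he, h1⟩
      · rw [mem_singleton] at hg; subst hg; exact mem_filter.mpr ⟨hf, h2⟩
    have := card_le_card hsub
    rw [card_pair hne] at this
    omega
  · have a1 := key (fun e => fst e = w) (by infer_instance) e he h1
    have a2 := key (fun e => snd e = w) (by infer_instance) f hf h2
    omega
  · have a1 := key (fun e => fst e = w) (by infer_instance) f hf h2
    have a2 := key (fun e => snd e = w) (by infer_instance) e he h1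
    omega
  · have hsub : ({e, f} : Finset E) ⊆ H.filter (fun e => snd e = w) := by
      intro g hg
      rcases mem_insert.mp hg with rfl | hg
      · exact mem_filter.mpr ⟨he, h1⟩
      · rw [mem_singleton] at hg; subst hg; exact mem_filter.mpr ⟨hf, h2⟩
    have := card_le_card hsub
    rw [card_pair hne] at this
    omega

lemma loop_deg {H : Finset E} {e : E} (he : e ∈ H) (hl : fst e = snd e) :
    2 ≤ degc fst snd H (fst e) := by
  unfold degc
  have a1 : 1 ≤ (H.filter (fun f => fst f = fst e)).card :=
    card_pos.mpr ⟨e, mem_filter.mpr ⟨he, rfl⟩⟩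
  have a2 : 1 ≤ (H.filter (fun f => snd f = fst e)).card :=
    card_pos.mpr ⟨e, mem_filter.mpr ⟨he, hl.symm⟩⟩
  omega

lemma one_le_degc {H : Finset E} {e : E} (he : e ∈ H) {w : V}
    (hw : fst e = w ∨ snd e = w) : 1 ≤ degc fst snd H w := by
  unfold degc
  rcases hw with h | h
  · have : 1 ≤ (H.filter (fun f => fst f = w)).card :=
      card_pos.mpr ⟨e, mem_filter.mpr ⟨he, h⟩⟩
    omega
  · have : 1 ≤ (H.filter (fun f => snd f = w)).card :=
      card_pos.mpr ⟨e, mem_filter.mpr ⟨he, h⟩⟩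
    omega

end HL

section Rec
variable {V E : Type*} [Fintype V] [DecidableEq V] [DecidableEq E] (fst snd : E → V)

lemma touch_cases {e : E} {v : V} (hev : fst e = v ∨ snd e = v)
    {w : V} (h : fst e = w ∨ snd e = w) : w = v ∨ w = other fst snd e v := by
  unfold other
  split_ifs with h'
  · rcases h with h | h
    · left; rw [← h, h']
    · right; exact h.symm
  · have hsv : snd e = v := by tauto
    rcases h with h | h
    · right; exact h.symm
    · left; rw [← h, hsv]

lemma avoid_both {S : Finset E} {v : V} {e : E} {H' : Finset E}
    (hsub : H' ⊆ delv fst snd (delv fst snd S v) (other fst snd e v))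
    {f : E} (hf : f ∈ H') :
    f ∈ S ∧ (fst f ≠ v ∧ snd f ≠ v) ∧
      (fst f ≠ other fst snd e v ∧ snd f ≠ other fst snd e v) := by
  have h1 := mem_filter.mp (hsub hf)
  have h2 := mem_filter.mp h1.1
  exact ⟨h2.1, h2.2, h1.2⟩

lemma mp_rec (S : Finset E) (v : V) (z : ℂ) :
    mp fst snd S z = mp fst snd (delv fst snd S v) z
      + z * ∑ e ∈ inc fst snd S v,
          mp fst snd (delv fst snd (delv fst snd S v) (other fst snd e v)) z := by
  classical
  have hsplit := (sum_filter_add_sum_filter_not (Ms fst snd S)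
    (fun H => ∀ e ∈ H, fst e ≠ v ∧ snd e ≠ v) (fun H => z ^ H.card)).symm
  rw [mp, hsplit]
  congr 1
  · -- v-free matchings = matchings of delv S v
    have hA : (Ms fst snd S).filter (fun H => ∀ e ∈ H, fst e ≠ v ∧ snd e ≠ v)
        = Ms fst snd (delv fst snd S v) := by
      ext H
      rw [mem_filter, mem_Ms, mem_Ms]
      constructor
      · rintro ⟨⟨hS, hM⟩, hfree⟩
        exact ⟨fun f hf => mem_filter.mpr ⟨hS hf, hfree f hf⟩, hM⟩
      · rintro ⟨hsub, hM⟩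
        exact ⟨⟨hsub.trans (delv_subset fst snd S v), hM⟩,
          fun f hf => (mem_filter.mp (hsub hf)).2⟩
    rw [hA, mp]
  · -- matchings with an edge at v
    have hB : (Ms fst snd S).filter (fun H => ¬ ∀ e ∈ H, fst e ≠ v ∧ snd e ≠ v)
        = (inc fst snd S v).biUnion (fun e =>
            ((Ms fst snd (delv fst snd (delv fst snd S v) (other fst snd e v))).image
              (insert e))) := by
      ext H
      rw [mem_filter, mem_biUnion]
      constructor
      · rintro ⟨hH, hnot⟩
        push_neg at hnot
        obtain ⟨e, heH, hev'⟩ := hnot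
        obtain ⟨hHS, hM⟩ := (mem_Ms fst snd).mp hH
        have hev : fst e = v ∨ snd e = v := by tauto
        have hnl : fst e ≠ snd e := by
          intro hl
          have h2 := loop_deg fst snd heH hl
          have := hM (fst e)
          omega
        refine ⟨e, mem_filter.mpr ⟨hHS heH, hev, hnl⟩, ?_⟩
        rw [mem_image]
        refine ⟨H.erase e, ?_, insert_erase heH⟩
        rw [mem_Ms]
        constructor
        · intro f hf
          have hfH : f ∈ H := mem_of_mem_erase hf
          have hfe : f ≠ e := ne_of_mem_erase hf
          have havoid : ∀ w, (fst e = w ∨ snd e = w) → fst f ≠ w ∧ snd f ≠ w := by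
            intro w hew
            constructor <;> intro hc
            · have h2 := two_edges fst snd heH hfH (Ne.symm hfe) hew (Or.inl hc)
              have := hM w; omega
            · have h2 := two_edges fst snd heH hfH (Ne.symm hfe) hew (Or.inr hc)
              have := hM w; omega
          have hov : fst e = other fst snd e v ∨ snd e = other fst snd e v := by
            unfold other; split_ifs <;> simp
          refine mem_filter.mpr ⟨mem_filter.mpr ⟨hHS hfH, havoid v hev⟩,
            havoid _ hov⟩
        · intro w
          exact le_trans (degc_mono fst snd (erase_subset e H) w) (hM w)
      · rintro ⟨e, he_inc, hHim⟩
        rw [mem_image] at hHim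
        obtain ⟨H', hH', rfl⟩ := hHim
        obtain ⟨heS, hev, hnl⟩ := mem_filter.mp he_inc
        obtain ⟨hsub', hM'⟩ := (mem_Ms fst snd).mp hH'
        have heH' : e ∉ H' := by
          intro hc
          have h := (avoid_both fst snd hsub' hc).2.1
          tauto
        have hw0 : ∀ w', (w' = v ∨ w' = other fst snd e v) → degc fst snd H' w' = 0 := by
          intro w' hw'
          unfold degc
          have h1 : H'.filter (fun f => fst f = w') = ∅ := by
            rw [filter_eq_empty_iff]
            intro f hf
            have h := avoid_both fst snd hsub' hf
            rcases hw' with rfl | rfl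
            · exact h.2.1.1
            · exact h.2.2.1
          have h2 : H'.filter (fun f => snd f = w') = ∅ := by
            rw [filter_eq_empty_iff]
            intro f hf
            have h := avoid_both fst snd hsub' hf
            rcases hw' with rfl | rfl
            · exact h.2.1.2
            · exact h.2.2.2
          rw [h1, h2]
          simp
        constructor
        · rw [mem_Ms]
          constructor
          · intro f hf
            rcases mem_insert.mp hf with rfl | hf
            · exact heS
            · exact delv_subset fst snd S v
                (delv_subset fst snd _ _ (hsub' hf))
          · intro w
            rw [degc_insert fst snd heH' w]
            by_cases h1 : fst e = w <;> by_cases h2 : snd e = w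
            · exact absurd (h1.trans h2.symm) hnl
            · have := hw0 w (touch_cases fst snd hev (Or.inl h1))
              simp [h1, h2, this]
            · have := hw0 w (touch_cases fst snd hev (Or.inr h2))
              simp [h1, h2, this]
            · have := hM' w
              simp [h1, h2]
              omega
        · push_neg
          exact ⟨e, mem_insert_self e H', by tauto⟩
    rw [hB]
    rw [sum_biUnion]
    · rw [mul_sum]
      apply sum_congr rfl
      intro e he_inc
      obtain ⟨heS, hev, hnl⟩ := mem_filter.mp he_inc
      have hnm : ∀ H' ∈ Ms fst snd (delv fst snd (delv fst snd S v) (other fst snd e v)),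
          e ∉ H' := by
        intro H' hH' hc
        have h := (avoid_both fst snd ((mem_Ms fst snd).mp hH').1 hc).2.1
        tauto
      rw [sum_image]
      · rw [mp, mul_sum]
        apply sum_congr rfl
        intro H' hH'
        rw [card_insert_of_notMem (hnm H' hH'), pow_succ]
        ring
      · intro H1 h1 H2 h2 heq
        have : (insert e H1).erase e = (insert e H2).erase e := by rw [heq]
        rwa [erase_insert (hnm H1 h1), erase_insert (hnm H2 h2)] at this
    · -- pairwise disjoint
      intro e1 h1 e2 h2 hne
      rw [Function.onFun, disjoint_left]
      rintro H hH1 hH2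
      have h2' := mem_filter.mp (mem_coe.mp h2)
      rw [mem_image] at hH1 hH2
      obtain ⟨H1, hH1', rfl⟩ := hH1
      obtain ⟨H2, hH2', heq⟩ := hH2
      have he2 : e2 ∈ insert e1 H1 := by rw [← heq]; exact mem_insert_self _ _
      rcases mem_insert.mp he2 with rfl | hmem
      · exact hne rfl
      · have h := (avoid_both fst snd ((mem_Ms fst snd).mp hH1').1 hmem).2.1
        have := h2'.2.1
        tauto

end Rec

section Main
variable {V E : Type*} [Fintype V] [DecidableEq V] [DecidableEq E] (fst snd : E → V)

lemma isM_empty : isM fst snd (∅ : Finset E) := by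
  intro w
  simp [degc]

lemma mp_empty (z : ℂ) : mp fst snd (∅ : Finset E) z = 1 := by
  have h : Ms fst snd (∅ : Finset E) = {∅} := by
    ext H
    rw [mem_Ms]
    simp only [subset_empty, mem_singleton]
    constructor
    · rintro ⟨rfl, _⟩; rfl
    · rintro rfl; exact ⟨rfl, isM_empty fst snd⟩
  simp [mp, h]

lemma delv_empty (v : V) : delv fst snd (∅ : Finset E) v = ∅ := rfl

open Complex in
lemma mp_main : ∀ (n : ℕ) (S : Finset E), S.card ≤ n → ∀ z : ℂ, 0 < z.im →
    mp fst snd S z ≠ 0 ∧ ∀ v : V, ∃ a b : ℝ, 0 < a ∧ 0 ≤ b ∧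
      mp fst snd (delv fst snd S v) z
        = ((a : ℂ) + (b : ℂ) * (starRingEnd ℂ) z) * mp fst snd S z := by
  intro n
  induction n with
  | zero =>
    intro S hcard z hz
    have hS : S = ∅ := card_eq_zero.mp (Nat.le_zero.mp hcard)
    subst hS
    refine ⟨by rw [mp_empty]; exact one_ne_zero, fun v => ⟨1, 0, one_pos, le_refl 0, ?_⟩⟩
    rw [delv_empty, mp_empty]
    push_cast
    ring
  | succ n ih =>
    intro S hcard z hz
    have key : ∀ v : V, delv fst snd S v ≠ S →
        mp fst snd S z ≠ 0 ∧ ∃ a b : ℝ, 0 < a ∧ 0 ≤ b ∧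
          mp fst snd (delv fst snd S v) z
            = ((a : ℂ) + (b : ℂ) * (starRingEnd ℂ) z) * mp fst snd S z := by
      intro v hne
      set T := delv fst snd S v with hT
      have hTcard : T.card ≤ n := by
        have hss : T ⊂ S := ⟨delv_subset fst snd S v,
          fun h => hne (hT ▸ le_antisymm (delv_subset fst snd S v) h)⟩
        have := card_lt_card hss
        omega
      obtain ⟨hT0, hrat⟩ := ih T hTcard z hz
      choose a b ha hb heq using hrat
      set A : ℝ := ∑ e ∈ inc fst snd S v, a (other fst snd e v) with hA
      set B : ℝ := ∑ e ∈ inc fst snd S v, b (other fst snd e v) with hB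
      have hA0 : 0 ≤ A := sum_nonneg fun e _ => (ha _).le
      have hB0 : 0 ≤ B := sum_nonneg fun e _ => hb _
      set F : ℂ := 1 + (A : ℂ) * z + (B : ℂ) * ((normSq z : ℝ) : ℂ) with hF
      have hcz : z * ((starRingEnd ℂ) z) = ((normSq z : ℝ) : ℂ) := mul_conj z
      have hmain : mp fst snd S z = F * mp fst snd T z := by
        rw [mp_rec fst snd S v z, ← hT]
        have hsum : ∑ e ∈ inc fst snd S v,
            mp fst snd (delv fst snd T (other fst snd e v)) z
            = ((A : ℂ) + (B : ℂ) * (starRingEnd ℂ) z) * mp fst snd T z := by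
          rw [sum_congr rfl (fun e _ => heq (other fst snd e v)), ← sum_mul]
          congr 1
          rw [sum_add_distrib, ← sum_mul, hA, hB]
          push_cast
          ring
        rw [hsum, hF]
        linear_combination ((B : ℂ) * mp fst snd T z) * hcz
      have him : F.im = A * z.im := by
        rw [hF]; simp
      have hre : F.re = 1 + A * z.re + B * normSq z := by
        rw [hF]; simp
      have hFne : F ≠ 0 := by
        rcases lt_or_eq_of_le hA0 with hApos | hAeq
        · have himne : F.im ≠ 0 := by rw [him]; exact ne_of_gt (mul_pos hApos hz)
          exact fun h0 => himne (by rw [h0]; simp)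
        · have hrepos : 0 < F.re := by
            rw [hre, ← hAeq]
            have := normSq_nonneg z
            nlinarith
          exact fun h0 => by rw [h0] at hrepos; simp at hrepos
      have hS0 : mp fst snd S z ≠ 0 := by
        rw [hmain]; exact mul_ne_zero hFne hT0
      refine ⟨hS0, ?_⟩
      set nF : ℝ := normSq F with hnF
      have hnF0 : 0 < nF := normSq_pos.mpr hFne
      refine ⟨(1 + B * normSq z) / nF, A / nF, ?_, ?_, ?_⟩
      · apply div_pos _ hnF0
        nlinarith [normSq_nonneg z]
      · exact div_nonneg hA0 hnF0.le
      · have hconjF : (starRingEnd ℂ) F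
            = (((1 + B * normSq z : ℝ)) : ℂ) + (A : ℂ) * (starRingEnd ℂ) z := by
          rw [hF]
          simp only [map_add, map_mul, map_one, conj_ofReal]
          push_cast
          ring
        have hFF : (starRingEnd ℂ) F * F = ((nF : ℝ) : ℂ) := by
          rw [hnF, mul_comm]
          exact mul_conj F
        rw [hmain]
        have hrw : ((((1 + B * normSq z) / nF : ℝ)) : ℂ)
            + (((A / nF : ℝ)) : ℂ) * (starRingEnd ℂ) z
            = (starRingEnd ℂ) F / ((nF : ℝ) : ℂ) := by
          rw [hconjF]
          push_cast
          ring
        rw [hrw, div_mul_eq_mul_div, ← mul_assoc, hFF]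
        exact (mul_div_cancel_left₀ _ (by exact_mod_cast hnF0.ne')).symm
    by_cases hSe : S = ∅
    · subst hSe
      refine ⟨by rw [mp_empty]; exact one_ne_zero, fun v => ⟨1, 0, one_pos, le_refl 0, ?_⟩⟩
      rw [delv_empty, mp_empty]
      push_cast
      ring
    · obtain ⟨e0, he0⟩ := nonempty_iff_ne_empty.mpr hSe
      have hne0 : delv fst snd S (fst e0) ≠ S := by
        intro h
        have : e0 ∈ delv fst snd S (fst e0) := by rw [h]; exact he0
        exact (mem_filter.mp this).2.1 rfl
      have hmpS := (key (fst e0) hne0).1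
      refine ⟨hmpS, fun v => ?_⟩
      by_cases hv : delv fst snd S v = S
      · refine ⟨1, 0, one_pos, le_refl 0, ?_⟩
        rw [hv]
        push_cast
        ring
      · exact (key v hv).2

end Main

lemma hl_part2 (N : ℕ → ℕ) (m : ℕ) (hN0 : N 0 = 1) (hNbig : ∀ j, m < j → N j = 0)
    (hroot : ∀ z : ℂ, (∑ j ∈ Finset.range (m+1), (N j : ℂ) * z ^ j) = 0 →
      ∃ x : ℝ, x < 0 ∧ z = (x : ℂ)) :
    ∀ j : ℕ, 1 ≤ j → 0 < N j → ((N (j-1) : ℝ)) * (N (j+1)) < ((N j : ℝ))^2 := by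
  classical
  set P : Polynomial ℝ := ∑ j ∈ Finset.range (m+1), C ((N j : ℝ)) * X^j with hP
  have hPcoeff : ∀ j, P.coeff j = (N j : ℝ) := by
    intro j
    rw [hP, finset_sum_coeff]
    simp only [coeff_C_mul, coeff_X_pow]
    rw [Finset.sum_eq_single j]
    · simp
    · intro i _ hij
      simp [Ne.symm hij]
    · intro hj
      rw [Finset.mem_range, not_lt] at hj
      simp [hNbig j (by omega)]
  have hP0 : P.coeff 0 = 1 := by rw [hPcoeff, hN0]; norm_num
  have hPne : P ≠ 0 := fun h => by simp [h] at hP0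
  have hdegle : P.natDegree ≤ m := by
    apply natDegree_sum_le_of_forall_le
    intro i hi
    exact (natDegree_C_mul_le _ _).trans
      (by rw [natDegree_X_pow]; exact Nat.lt_succ_iff.mp (Finset.mem_range.mp hi))
  set Pc : Polynomial ℂ := P.map (algebraMap ℝ ℂ) with hPc
  have heval : ∀ z : ℂ, Pc.eval z = ∑ j ∈ Finset.range (m+1), (N j : ℂ) * z^j := by
    intro z
    rw [hPc, hP]
    rw [Polynomial.map_sum]
    rw [eval_finset_sum]
    apply Finset.sum_congr rfl
    intro i _
    rw [Polynomial.map_mul, Polynomial.map_pow, map_C, map_X, eval_mul, eval_pow,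
      eval_C, eval_X]
    norm_num
  have hPcne : Pc ≠ 0 := Polynomial.map_ne_zero hPne
  have hsplits : Pc.Splits := IsAlgClosed.splits Pc
  have hfact := hsplits.eq_prod_roots
  have hroots : ∀ w ∈ Pc.roots, ∃ x : ℝ, x < 0 ∧ w = (x : ℂ) := by
    intro w hw
    apply hroot
    rw [← heval w]
    exact isRoot_of_mem_roots hw
  set t : Multiset ℝ := Pc.roots.map (fun w => -w.re) with ht
  have htpos : ∀ x ∈ t, 0 < x := by
    intro x hx
    rw [ht, Multiset.mem_map] at hx
    obtain ⟨w, hw, rfl⟩ := hx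
    obtain ⟨y, hy, rfl⟩ := hroots w hw
    simpa using hy
  have hprodeq : (Pc.roots.map (fun a => X - C a)).prod = (HLQ t).map (algebraMap ℝ ℂ) := by
    rw [HLQ, Polynomial.map_multiset_prod, ht, Multiset.map_map, Multiset.map_map]
    congr 1
    apply Multiset.map_congr rfl
    intro w hw
    obtain ⟨y, _, rfl⟩ := hroots w hw
    simp only [Function.comp_apply, Polynomial.map_add, map_X, map_C]
    rw [sub_eq_add_neg]
    congr 1
    rw [← map_neg C]
    congr 1
    simp [Complex.ext_iff]
  have hlc : Pc.leadingCoeff = ((P.leadingCoeff : ℝ) : ℂ) := leadingCoeff_map _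
  have hPfact : P = C P.leadingCoeff * HLQ t := by
    apply Polynomial.map_injective (algebraMap ℝ ℂ) (RingHom.injective _)
    rw [Polynomial.map_mul, map_C, ← hprodeq, Complex.coe_algebraMap, ← hlc, ← hfact]
  have hcardt : Multiset.card t = P.natDegree := by
    rw [ht, Multiset.card_map]
    rw [splits_iff_card_roots.mp hsplits, hPc, natDegree_map]
  have hplc : 0 < P.leadingCoeff := by
    rcases lt_or_eq_of_le (show (0:ℝ) ≤ P.leadingCoeff by
      rw [leadingCoeff, hPcoeff]; positivity) with h | h
    · exact h
    · exact absurd h.symm (leadingCoeff_ne_zero.mpr hPne)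
  have hNQ : ∀ j, (N j : ℝ) = P.leadingCoeff * (HLQ t).coeff j := by
    intro j
    rw [← hPcoeff j]
    conv_lhs => rw [hPfact]
    rw [coeff_C_mul]
  intro j hj hNj
  obtain ⟨k, rfl⟩ : ∃ k, j = k + 1 := ⟨j - 1, (Nat.succ_pred_eq_of_pos hj).symm⟩
  have hQnn := HLQ_coeff_nonneg t htpos
  have hQpos : 0 < (HLQ t).coeff (k+1) := by
    rcases lt_or_eq_of_le (hQnn (k+1)) with h | h
    · exact h
    · exfalso
      have : (0:ℝ) < N (k+1) := by exact_mod_cast hNj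
      rw [hNQ (k+1), ← h, mul_zero] at this
      exact lt_irrefl 0 this
  have hk1 : k + 1 ≤ Multiset.card t := by
    by_contra h
    rw [HLQ_coeff_eq_zero t (k+1) (by omega)] at hQpos
    exact lt_irrefl 0 hQpos
  have hstrict := HLQ_logconcave_strict t htpos k hk1
  have hsimp : k + 1 - 1 = k := rfl
  rw [hsimp, hNQ k, hNQ (k+1+1), hNQ (k+1)]
  have hplc2 : 0 < P.leadingCoeff * P.leadingCoeff := mul_pos hplc hplc
  nlinarith [mul_lt_mul_of_pos_left hstrict hplc2]


theorem heilmann_lieb_univariate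
    {V E : Type*} [Fintype V] [Fintype E] [DecidableEq V] [DecidableEq E]
    (fst snd : E → V)
    (deg : Finset E → V → ℕ)
    (hdeg : ∀ (H : Finset E) (v : V), deg H v =
      (H.filter (fun e => fst e = v)).card + (H.filter (fun e => snd e = v)).card)
    (N : ℕ → ℕ)
    (hN : ∀ j, N j = ((Finset.univ : Finset E).powerset.filter
      (fun H => H.card = j ∧ ∀ v : V, deg H v ≤ 1)).card) :
    (∀ z : ℂ,
      (∑ j ∈ Finset.range (Fintype.card E + 1), (N j : ℂ) * z ^ j) = 0 →
        ∃ x : ℝ, x < 0 ∧ z = (x : ℂ)) ∧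
    (∀ j : ℕ, 1 ≤ j → 0 < N j →
      ((N (j - 1) : ℝ)) * (N (j + 1)) < ((N j : ℝ)) ^ 2) := by
  classical
  have hNdef : ∀ j, N j = (((Finset.univ : Finset E).powerset).filter
      (fun H => H.card = j ∧ isM fst snd H)).card := by
    intro j
    rw [hN j]
    congr 1
    apply filter_congr
    intro H _
    have hiff : (∀ v, deg H v ≤ 1) ↔ isM fst snd H := by
      unfold isM degc
      constructor <;> intro h v <;> have hv := h v
      · rwa [hdeg H v] at hv
      · rwa [hdeg H v]
    simp [hiff]
  have hsum : ∀ z : ℂ, (∑ j ∈ Finset.range (Fintype.card E + 1), (N j : ℂ) * z ^ j)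
      = mp fst snd (Finset.univ : Finset E) z := by
    intro z
    rw [mp]
    rw [← Finset.sum_fiberwise_of_maps_to (g := fun H : Finset E => H.card)
      (t := Finset.range (Fintype.card E + 1))
      (fun H _ => Finset.mem_range.mpr (Nat.lt_succ_of_le (Finset.card_le_univ H)))]
    apply Finset.sum_congr rfl
    intro j _
    rw [Finset.sum_congr rfl
      (fun H hH => by rw [(Finset.mem_filter.mp hH).2])]
    rw [Finset.sum_const, nsmul_eq_mul]
    congr 1
    rw [hNdef j]
    norm_cast
    rw [Ms, Finset.filter_filter]
    congr 1
    · apply filter_congr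
      intro H _
      simp [and_comm]
  have hN0 : N 0 = 1 := by
    rw [hNdef 0]
    have hset : ((Finset.univ : Finset E).powerset).filter
        (fun H => H.card = 0 ∧ isM fst snd H) = {∅} := by
      ext H
      simp only [Finset.mem_filter, Finset.mem_powerset, Finset.mem_singleton,
        Finset.card_eq_zero]
      constructor
      · rintro ⟨-, rfl, -⟩; rfl
      · rintro rfl; exact ⟨Finset.empty_subset _, rfl, isM_empty fst snd⟩
    rw [hset, Finset.card_singleton]
  have hNbig : ∀ j, Fintype.card E < j → N j = 0 := by
    intro j hj
    rw [hNdef j, Finset.card_eq_zero, Finset.filter_eq_empty_iff]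
    rintro H - ⟨hcard, -⟩
    have := Finset.card_le_univ H
    omega
  have part1 : ∀ z : ℂ,
      (∑ j ∈ Finset.range (Fintype.card E + 1), (N j : ℂ) * z ^ j) = 0 →
        ∃ x : ℝ, x < 0 ∧ z = (x : ℂ) := by
    intro z h0
    rcases lt_trichotomy z.im 0 with hlt | heq | hgt
    · exfalso
      have h0' : (∑ j ∈ Finset.range (Fintype.card E + 1),
          (N j : ℂ) * ((starRingEnd ℂ) z) ^ j) = 0 := by
        have hc := congrArg (starRingEnd ℂ) h0
        simpa only [map_sum, map_mul, map_pow, map_zero, map_natCast] using hc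
      have him : 0 < ((starRingEnd ℂ) z).im := by
        rw [Complex.conj_im]; linarith
      have hne := (mp_main fst snd (Fintype.card E) Finset.univ
        (le_of_eq Finset.card_univ) _ him).1
      rw [hsum] at h0'
      exact hne h0'
    · have hz : z = ((z.re : ℝ) : ℂ) := by
        apply Complex.ext <;> simp [heq]
      refine ⟨z.re, ?_, hz⟩
      by_contra hge
      push_neg at hge
      rw [hz] at h0
      have hreal : (∑ j ∈ Finset.range (Fintype.card E + 1),
          (N j : ℝ) * z.re ^ j) = 0 := by
        exact_mod_cast h0
      have hge1 : (1:ℝ) ≤ ∑ j ∈ Finset.range (Fintype.card E + 1),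
          (N j : ℝ) * z.re ^ j := by
        have h00 : (N 0 : ℝ) * z.re ^ 0 = 1 := by simp [hN0]
        calc (1:ℝ) = (N 0 : ℝ) * z.re ^ 0 := h00.symm
        _ ≤ _ := Finset.single_le_sum (f := fun j => (N j : ℝ) * z.re ^ j)
            (fun i _ => by positivity) (Finset.mem_range.mpr (by omega))
      rw [hreal] at hge1
      linarith
    · exfalso
      have hne := (mp_main fst snd (Fintype.card E) Finset.univ
        (le_of_eq Finset.card_univ) z hgt).1
      rw [hsum z] at h0
      exact hne h0
  exact ⟨part1, hl_part2 N (Fintype.card E) hN0 hNbig part1⟩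
end
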